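/- arXiv:2603.13737 — 5 statements merged into one kernel-verified Lean document; each statement's English description precedes it below -/
import Mathlib

section
/- Let X be a finite set, let F ⊆ 2^X be an increasing family with F ≠ ∅ and F ≠ 2^X, let 0 < ε < 1, and let p* ∈ [0,1]^X satisfy ε < μ_{p*}(F) < 1 − ε. Then for every integer m ≥ 1: (i) μ_{p'}(F) ≥ 1 − (1−ε)^m, where p'_x = min(1, m·p*_x) for every x ∈ X; and (ii) μ_{p*/m}(F) ≤ 1 − ε^{1/m}. In particular, if m = m(n) → ∞ as |X| → ∞ then μ_{p'}(F) → 1 and μ_{p*/m}(F) → 0. -/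
open Finset

/-- The product measure of a family of subsets of a finite set `X`:
`μ_p(F) = ∑_{S ∈ F} ∏_{x ∈ S} p x · ∏_{y ∉ S} (1 - p y)`. -/
noncomputable def mu {X : Type*} [Fintype X] [DecidableEq X]
    (p : X → ℝ) (F : Finset (Finset X)) : ℝ :=
  ∑ S ∈ F, (∏ x ∈ S, p x) * ∏ y ∈ Sᶜ, (1 - p y)

section aux
variable {X : Type*} [Fintype X] [DecidableEq X]

/-- weight of a single set -/
noncomputable def nu (p : X → ℝ) (S : Finset X) : ℝ :=
  (∏ x ∈ S, p x) * ∏ y ∈ Sᶜ, (1 - p y)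

lemma mu_eq (p : X → ℝ) (F : Finset (Finset X)) : mu p F = ∑ S ∈ F, nu p S := rfl

lemma nu_nonneg {p : X → ℝ} (hp : ∀ x, 0 ≤ p x ∧ p x ≤ 1) (S : Finset X) : 0 ≤ nu p S := by
  apply mul_nonneg
  · exact Finset.prod_nonneg fun x _ => (hp x).1
  · exact Finset.prod_nonneg fun x _ => by linarith [(hp x).2]

lemma mu_nonneg {p : X → ℝ} (hp : ∀ x, 0 ≤ p x ∧ p x ≤ 1) (F : Finset (Finset X)) :
    0 ≤ mu p F :=
  Finset.sum_nonneg fun S _ => nu_nonneg hp S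

lemma sum_nu (p : X → ℝ) : ∑ S ∈ (univ : Finset X).powerset, nu p S = 1 := by
  have h := Finset.prod_add p (fun x => 1 - p x) (univ : Finset X)
  simp only [add_sub_cancel, Finset.prod_const_one] at h
  rw [h]
  apply Finset.sum_congr rfl
  intro S hS
  rw [nu, Finset.compl_eq_univ_sdiff]


lemma mu_le_one {p : X → ℝ} (hp : ∀ x, 0 ≤ p x ∧ p x ≤ 1) (F : Finset (Finset X)) :
    mu p F ≤ 1 := by
  rw [mu_eq, ← sum_nu p]
  apply Finset.sum_le_sum_of_subset_of_nonneg
  · intro S _; simp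
  · intro S _ _; exact nu_nonneg hp S

/-- the weight with coordinate `a` removed -/
noncomputable def w (r : X → ℝ) (a : X) (S : Finset X) : ℝ :=
  (∏ x ∈ S.erase a, r x) * ∏ y ∈ Sᶜ.erase a, (1 - r y)

lemma w_nonneg {r : X → ℝ} (hr : ∀ x, 0 ≤ r x ∧ r x ≤ 1) (a : X) (S : Finset X) :
    0 ≤ w r a S := by
  apply mul_nonneg
  · exact Finset.prod_nonneg fun x _ => (hr x).1
  · exact Finset.prod_nonneg fun x _ => by linarith [(hr x).2]

lemma nu_update_mem {r : X → ℝ} {t : ℝ} {a : X} {S : Finset X} (ha : a ∈ S) :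
    nu (Function.update r a t) S = t * w r a S := by
  rw [nu, w]
  have h1 : (∏ x ∈ S, Function.update r a t x) = t * ∏ x ∈ S.erase a, r x := by
    rw [← Finset.prod_erase_mul _ _ ha, Function.update_self, mul_comm]
    congr 1
    exact Finset.prod_congr rfl fun x hx => Function.update_of_ne (Finset.ne_of_mem_erase hx) _ _
  have h2 : (∏ y ∈ Sᶜ, (1 - Function.update r a t y)) = ∏ y ∈ Sᶜ.erase a, (1 - r y) := by
    rw [Finset.erase_eq_of_notMem (by simp [ha])]
    exact Finset.prod_congr rfl fun y hy => by
      rw [Function.update_of_ne]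
      intro h; subst h; exact (Finset.mem_compl.mp hy) ha
  rw [h1, h2]; ring

lemma nu_update_notMem {r : X → ℝ} {t : ℝ} {a : X} {S : Finset X} (ha : a ∉ S) :
    nu (Function.update r a t) S = (1 - t) * w r a S := by
  rw [nu, w]
  have h1 : (∏ x ∈ S, Function.update r a t x) = ∏ x ∈ S.erase a, r x := by
    rw [Finset.erase_eq_of_notMem ha]
    exact Finset.prod_congr rfl fun x hx => Function.update_of_ne (by rintro rfl; exact ha hx) _ _
  have haC : a ∈ Sᶜ := Finset.mem_compl.mpr ha
  have h2 : (∏ y ∈ Sᶜ, (1 - Function.update r a t y)) =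
      (1 - t) * ∏ y ∈ Sᶜ.erase a, (1 - r y) := by
    rw [← Finset.prod_erase_mul _ _ haC, Function.update_self, mul_comm]
    congr 1
    exact Finset.prod_congr rfl fun y hy => by
      rw [Function.update_of_ne (Finset.ne_of_mem_erase hy)]
  rw [h1, h2]; ring

lemma w_insert {r : X → ℝ} {a : X} {S : Finset X} (ha : a ∉ S) :
    w r a (insert a S) = w r a S := by
  rw [w, w]
  congr 1
  · rw [Finset.erase_insert ha, Finset.erase_eq_of_notMem ha]
  · congr 1
    rw [Finset.compl_insert, Finset.erase_idem]

lemma mu_update_mono {r : X → ℝ} (hr : ∀ x, 0 ≤ r x ∧ r x ≤ 1) {a : X} {t₁ t₂ : ℝ}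
    (ht : t₁ ≤ t₂) {F : Finset (Finset X)}
    (hInc : ∀ S ∈ F, ∀ T : Finset X, S ⊆ T → T ∈ F) :
    mu (Function.update r a t₁) F ≤ mu (Function.update r a t₂) F := by
  have key : ∀ t : ℝ, mu (Function.update r a t) F =
      (∑ S ∈ F.filter (fun S => a ∉ S), w r a S) +
      t * ((∑ S ∈ F.filter (fun S => a ∈ S), w r a S)
         - (∑ S ∈ F.filter (fun S => a ∉ S), w r a S)) := by
    intro t
    rw [mu_eq, ← Finset.sum_filter_add_sum_filter_not F (fun S => a ∈ S)]
    rw [Finset.sum_congr rfl (fun S hS => nu_update_mem (Finset.mem_filter.mp hS).2),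
        Finset.sum_congr rfl (fun S hS => nu_update_notMem (Finset.mem_filter.mp hS).2)]
    rw [← Finset.mul_sum, ← Finset.mul_sum]
    ring
  have hAB : (∑ S ∈ F.filter (fun S => a ∉ S), w r a S) ≤
      (∑ S ∈ F.filter (fun S => a ∈ S), w r a S) := by
    have himg : (F.filter (fun S => a ∉ S)).image (insert a) ⊆ F.filter (fun S => a ∈ S) := by
      intro T hT
      obtain ⟨S, hS, rfl⟩ := Finset.mem_image.mp hT
      obtain ⟨hSF, _⟩ := Finset.mem_filter.mp hS
      exact Finset.mem_filter.mpr ⟨hInc S hSF _ (Finset.subset_insert a S), Finset.mem_insert_self a S⟩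
    calc (∑ S ∈ F.filter (fun S => a ∉ S), w r a S)
        = ∑ T ∈ (F.filter (fun S => a ∉ S)).image (insert a), w r a T := by
          rw [Finset.sum_image]
          · exact Finset.sum_congr rfl fun S hS =>
              (w_insert (Finset.mem_filter.mp hS).2).symm
          · intro S hS T hT hST
            have hS' := (Finset.mem_filter.mp hS).2
            have hT' := (Finset.mem_filter.mp hT).2
            have := congrArg (Finset.erase · a) hST
            simpa [Finset.erase_insert hS', Finset.erase_insert hT'] using this
      _ ≤ ∑ S ∈ F.filter (fun S => a ∈ S), w r a S :=
          Finset.sum_le_sum_of_subset_of_nonneg himg fun S _ _ => w_nonneg hr a S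
  rw [key t₁, key t₂]
  nlinarith [hAB]

lemma mu_mono {p q : X → ℝ} (hp : ∀ x, 0 ≤ p x ∧ p x ≤ 1) (hq : ∀ x, 0 ≤ q x ∧ q x ≤ 1)
    (hpq : ∀ x, p x ≤ q x) {F : Finset (Finset X)}
    (hInc : ∀ S ∈ F, ∀ T : Finset X, S ⊆ T → T ∈ F) :
    mu p F ≤ mu q F := by
  have main : ∀ A : Finset X, mu p F ≤ mu (fun x => if x ∈ A then q x else p x) F := by
    intro A
    induction A using Finset.induction_on with
    | empty => simp [mu]
    | @insert a A ha ih =>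
      set r : X → ℝ := fun x => if x ∈ A then q x else p x with hr
      have hrbd : ∀ x, 0 ≤ r x ∧ r x ≤ 1 := by
        intro x; by_cases h : x ∈ A <;> simp [hr, h, hp x, hq x]
      have h1 : (fun x => if x ∈ insert a A then q x else p x) = Function.update r a (q a) := by
        funext x
        by_cases hx : x = a
        · subst hx; simp [Function.update_self, hr]
        · simp [Function.update_of_ne hx, hr, hx]
      have h2 : r = Function.update r a (p a) := by
        funext x
        by_cases hx : x = a
        · subst hx; simp [Function.update_self, hr, ha]
        · simp [Function.update_of_ne hx]
      calc mu p F ≤ mu r F := ih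
        _ = mu (Function.update r a (p a)) F := by rw [← h2]
        _ ≤ mu (Function.update r a (q a)) F := mu_update_mono hrbd (hpq a) hInc
        _ = mu (fun x => if x ∈ insert a A then q x else p x) F := by rw [h1]
  have := main univ
  simpa using this

lemma nu_aux_sum (q : X → ℝ) {S U : Finset X} (hS : S ⊆ U) :
    (∑ T ∈ (univ : Finset X).powerset, (if S ∪ T = U then nu q T else 0))
      = (∏ x ∈ U \ S, q x) * ∏ y ∈ Uᶜ, (1 - q y) := by
  rw [← Finset.sum_filter]
  have hbij : ∑ T ∈ (univ : Finset X).powerset.filter (fun T => S ∪ T = U), nu q T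
      = ∑ R ∈ S.powerset, nu q ((U \ S) ∪ R) := by
    apply Finset.sum_nbij' (i := fun T => T ∩ S) (j := fun R => (U \ S) ∪ R)
    · intro T hT
      simp
    · intro R hR
      simp only [Finset.mem_filter, Finset.mem_powerset] at hR ⊢
      refine ⟨Finset.subset_univ _, ?_⟩
      ext x
      simp only [Finset.mem_union, Finset.mem_sdiff]
      constructor
      · rintro (h | h | h)
        · exact hS h
        · exact h.1
        · exact hS (hR h)
      · intro hx
        by_cases h : x ∈ S
        · exact Or.inl h
        · exact Or.inr (Or.inl ⟨hx, h⟩)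
    · intro T hT
      simp only [Finset.mem_filter, Finset.mem_powerset] at hT
      have hU := Finset.ext_iff.mp hT.2
      ext x
      have h1 := hU x
      simp only [Finset.mem_union] at h1
      simp only [Finset.mem_union, Finset.mem_sdiff, Finset.mem_inter]
      tauto
    · intro R hR
      simp only [Finset.mem_powerset] at hR
      ext x
      simp only [Finset.mem_inter, Finset.mem_union, Finset.mem_sdiff]
      have h2 : x ∈ R → x ∈ S := fun h => hR h
      tauto
    · intro T hT
      simp only [Finset.mem_filter, Finset.mem_powerset] at hT
      have hU := Finset.ext_iff.mp hT.2
      have hS' : ∀ y, y ∈ S → y ∈ U := fun y hy => Finset.subset_iff.mp hS hy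
      congr 1
      ext x
      have h1 := hU x
      have h2 := hS' x
      simp only [Finset.mem_union] at h1
      simp only [Finset.mem_union, Finset.mem_sdiff, Finset.mem_inter]
      tauto
  rw [hbij]
  have hterm : ∀ R ∈ S.powerset, nu q ((U \ S) ∪ R)
      = ((∏ x ∈ U \ S, q x) * ∏ y ∈ Uᶜ, (1 - q y)) *
        ((∏ x ∈ R, q x) * ∏ x ∈ S \ R, (1 - q x)) := by
    intro R hR
    have hRS : R ⊆ S := Finset.mem_powerset.mp hR
    have hdisj : Disjoint (U \ S) R := by
      apply Finset.disjoint_left.mpr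
      intro x hx hxR
      exact (Finset.mem_sdiff.mp hx).2 (hRS hxR)
    have hcompl : ((U \ S) ∪ R)ᶜ = (S \ R) ∪ Uᶜ := by
      ext x
      simp only [Finset.mem_compl, Finset.mem_union, Finset.mem_sdiff]
      have h1 : x ∈ R → x ∈ S := fun h => hRS h
      have h2 : x ∈ S → x ∈ U := fun h => hS h
      tauto
    have hdisj2 : Disjoint (S \ R) Uᶜ := by
      apply Finset.disjoint_left.mpr
      intro x hx hxU
      exact (Finset.mem_compl.mp hxU) (hS (Finset.mem_sdiff.mp hx).1)
    rw [nu, Finset.prod_union hdisj, hcompl, Finset.prod_union hdisj2]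
    ring
  rw [Finset.sum_congr rfl hterm, ← Finset.mul_sum]
  have hone : (∑ R ∈ S.powerset, (∏ x ∈ R, q x) * ∏ x ∈ S \ R, (1 - q x)) = 1 := by
    rw [← Finset.prod_add]
    simp
  rw [hone, mul_one]

lemma key_identity (p q : X → ℝ) (U : Finset X) :
    (∑ S ∈ (univ : Finset X).powerset, ∑ T ∈ (univ : Finset X).powerset,
      (if S ∪ T = U then nu p S * nu q T else 0))
      = nu (fun x => p x + (1 - p x) * q x) U := by
  have step1 : ∀ S : Finset X, (∑ T ∈ (univ : Finset X).powerset,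
      (if S ∪ T = U then nu p S * nu q T else 0))
      = nu p S * ∑ T ∈ (univ : Finset X).powerset, (if S ∪ T = U then nu q T else 0) := by
    intro S
    rw [Finset.mul_sum]
    exact Finset.sum_congr rfl fun T _ => by rw [mul_ite, mul_zero]
  rw [Finset.sum_congr rfl fun S _ => step1 S]
  rw [← Finset.sum_subset (Finset.powerset_mono.mpr (Finset.subset_univ U))
    (fun S _ hS => ?_)]
  swap
  · have hSU : ¬ S ⊆ U := fun h => hS (Finset.mem_powerset.mpr h)
    have : ∀ T ∈ (univ : Finset X).powerset, (if S ∪ T = U then nu q T else 0) = 0 := by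
      intro T _
      rw [if_neg]
      intro h
      exact hSU (h ▸ Finset.subset_union_left)
    rw [Finset.sum_congr rfl this]
    simp
  · have hterm : ∀ S ∈ U.powerset,
        nu p S * ∑ T ∈ (univ : Finset X).powerset, (if S ∪ T = U then nu q T else 0)
        = ((∏ x ∈ S, p x) * ∏ x ∈ U \ S, ((1 - p x) * q x)) *
          ∏ y ∈ Uᶜ, ((1 - p y) * (1 - q y)) := by
      intro S hS
      have hSU : S ⊆ U := Finset.mem_powerset.mp hS
      rw [nu_aux_sum q hSU, nu]
      have hc : Sᶜ = (U \ S) ∪ Uᶜ := by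
        ext x
        simp only [Finset.mem_compl, Finset.mem_union, Finset.mem_sdiff]
        constructor
        · intro h
          by_cases hxU : x ∈ U
          · exact Or.inl ⟨hxU, h⟩
          · exact Or.inr hxU
        · rintro (⟨_, h⟩ | h)
          · exact h
          · exact fun hxS => h (hSU hxS)
      have hd : Disjoint (U \ S) Uᶜ := by
        apply Finset.disjoint_left.mpr
        intro x hx hxU
        exact (Finset.mem_compl.mp hxU) (Finset.mem_sdiff.mp hx).1
      rw [hc, Finset.prod_union hd, Finset.prod_mul_distrib, Finset.prod_mul_distrib]
      ring
    rw [Finset.sum_congr rfl hterm, ← Finset.sum_mul, nu]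
    congr 1
    · rw [← Finset.prod_add]
    · exact Finset.prod_congr rfl fun y _ => by ring

lemma sprinkle {p q : X → ℝ} (hp : ∀ x, 0 ≤ p x ∧ p x ≤ 1) (hq : ∀ x, 0 ≤ q x ∧ q x ≤ 1)
    {F : Finset (Finset X)} (hInc : ∀ S ∈ F, ∀ T : Finset X, S ⊆ T → T ∈ F) :
    1 - mu (fun x => p x + (1 - p x) * q x) F ≤ (1 - mu p F) * (1 - mu q F) := by
  set G : Finset (Finset X) := (univ : Finset X).powerset \ F with hG
  have hFP : F ⊆ (univ : Finset X).powerset := fun S _ => Finset.mem_powerset.mpr (Finset.subset_univ S)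
  have hmuG : ∀ r : X → ℝ, mu r G = 1 - mu r F := by
    intro r
    have := Finset.sum_sdiff (f := nu r) hFP
    rw [sum_nu r] at this
    rw [mu_eq, mu_eq, ← this]
    ring
  have hGd : ∀ T ∈ G, ∀ S : Finset X, S ⊆ T → S ∈ G := by
    intro T hT S hST
    rw [hG, Finset.mem_sdiff] at hT ⊢
    exact ⟨Finset.mem_powerset.mpr (Finset.subset_univ S), fun hSF => hT.2 (hInc S hSF T hST)⟩
  rw [← hmuG, ← hmuG, ← hmuG]
  -- mu r G ≤ mu p G * mu q G
  have hr : ∀ x, 0 ≤ p x + (1 - p x) * q x ∧ p x + (1 - p x) * q x ≤ 1 := by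
    intro x
    obtain ⟨h1, h2⟩ := hp x
    obtain ⟨h3, h4⟩ := hq x
    constructor <;> nlinarith
  calc mu (fun x => p x + (1 - p x) * q x) G
      = ∑ U ∈ G, ∑ S ∈ (univ : Finset X).powerset, ∑ T ∈ (univ : Finset X).powerset,
          (if S ∪ T = U then nu p S * nu q T else 0) := by
        rw [mu_eq]
        exact Finset.sum_congr rfl fun U _ => (key_identity p q U).symm
    _ = ∑ S ∈ (univ : Finset X).powerset, ∑ T ∈ (univ : Finset X).powerset,
          (if S ∪ T ∈ G then nu p S * nu q T else 0) := by
        rw [Finset.sum_comm]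
        apply Finset.sum_congr rfl
        intro S _
        rw [Finset.sum_comm]
        apply Finset.sum_congr rfl
        intro T _
        rw [Finset.sum_ite_eq G (S ∪ T) (fun _ => nu p S * nu q T)]
    _ ≤ ∑ S ∈ (univ : Finset X).powerset, ∑ T ∈ (univ : Finset X).powerset,
          (if S ∈ G ∧ T ∈ G then nu p S * nu q T else 0) := by
        apply Finset.sum_le_sum
        intro S _
        apply Finset.sum_le_sum
        intro T _
        by_cases h : S ∪ T ∈ G
        · rw [if_pos h, if_pos ⟨hGd _ h S Finset.subset_union_left,
            hGd _ h T Finset.subset_union_right⟩]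
        · rw [if_neg h]
          by_cases h2 : S ∈ G ∧ T ∈ G
          · rw [if_pos h2]
            exact mul_nonneg (nu_nonneg hp S) (nu_nonneg hq T)
          · rw [if_neg h2]
    _ = mu p G * mu q G := by
        have hGsub : G ⊆ (univ : Finset X).powerset := Finset.sdiff_subset
        have hinter : (univ : Finset X).powerset ∩ G = G := Finset.inter_eq_right.mpr hGsub
        rw [mu_eq, mu_eq, Finset.sum_mul_sum]
        have h1 : ∀ S ∈ (univ : Finset X).powerset,
            (∑ T ∈ (univ : Finset X).powerset, if S ∈ G ∧ T ∈ G then nu p S * nu q T else 0)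
            = if S ∈ G then ∑ T ∈ G, nu p S * nu q T else 0 := by
          intro S _
          by_cases hSG : S ∈ G
          · simp only [hSG, true_and, if_true, Finset.sum_ite_mem, hinter]
          · simp [hSG]
        rw [Finset.sum_congr rfl h1, Finset.sum_ite_mem, hinter]

omit [Fintype X] [DecidableEq X] in
lemma pow_bounds {p : X → ℝ} (hp : ∀ x, 0 ≤ p x ∧ p x ≤ 1) (n : ℕ) :
    ∀ x, 0 ≤ 1 - (1 - p x) ^ n ∧ 1 - (1 - p x) ^ n ≤ 1 := by
  intro x
  obtain ⟨h1, h2⟩ := hp x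
  constructor
  · have : (1 - p x) ^ n ≤ 1 := pow_le_one₀ (by linarith) (by linarith)
    linarith
  · have : 0 ≤ (1 - p x) ^ n := pow_nonneg (by linarith) n
    linarith

lemma sprinkle_pow {p : X → ℝ} (hp : ∀ x, 0 ≤ p x ∧ p x ≤ 1)
    {F : Finset (Finset X)} (hInc : ∀ S ∈ F, ∀ T : Finset X, S ⊆ T → T ∈ F) (m : ℕ) :
    1 - mu (fun x => 1 - (1 - p x) ^ m) F ≤ (1 - mu p F) ^ m := by
  induction m with
  | zero =>
    simp only [pow_zero, sub_self]
    have := mu_nonneg (p := fun _ : X => (0 : ℝ)) (by intro x; norm_num) F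
    linarith
  | succ n ih =>
    have h := sprinkle (pow_bounds hp n) hp hInc
    have heq : (fun x => (1 - (1 - p x) ^ n) + (1 - (1 - (1 - p x) ^ n)) * p x)
        = (fun x => 1 - (1 - p x) ^ (n + 1)) := funext fun x => by ring
    rw [heq] at h
    have hmu1 : mu p F ≤ 1 := mu_le_one hp F
    calc 1 - mu (fun x => 1 - (1 - p x) ^ (n + 1)) F
        ≤ (1 - mu (fun x => 1 - (1 - p x) ^ n) F) * (1 - mu p F) := h
      _ ≤ (1 - mu p F) ^ n * (1 - mu p F) :=
          mul_le_mul_of_nonneg_right ih (by linarith)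
      _ = (1 - mu p F) ^ (n + 1) := (pow_succ _ n).symm

end aux


theorem stmt0 {X : Type*} [Fintype X] [DecidableEq X]
    (F : Finset (Finset X))
    (hInc : ∀ S ∈ F, ∀ T : Finset X, S ⊆ T → T ∈ F)
    (hne : F.Nonempty) (hnfull : F ≠ Finset.univ.powerset)
    (ε : ℝ) (hε0 : 0 < ε) (hε1 : ε < 1)
    (pstar : X → ℝ) (hp : ∀ x, 0 ≤ pstar x ∧ pstar x ≤ 1)
    (hlo : ε < mu pstar F) (hhi : mu pstar F < 1 - ε)
    (m : ℕ) (hm : 1 ≤ m) :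
    1 - (1 - ε) ^ m ≤ mu (fun x => min 1 (m * pstar x)) F ∧
    mu (fun x => pstar x / m) F ≤ 1 - ε ^ ((1 : ℝ) / m) := by
  have hm0 : (m : ℝ) ≠ 0 := Nat.cast_ne_zero.mpr (by omega)
  have hm1 : (1 : ℝ) ≤ (m : ℝ) := by exact_mod_cast hm
  have hmu1 : mu pstar F ≤ 1 := mu_le_one hp F
  constructor
  · -- part (i)
    set r : X → ℝ := fun x => 1 - (1 - pstar x) ^ m with hrdef
    have hr := pow_bounds hp m
    have hmin : ∀ x, 0 ≤ min 1 ((m : ℝ) * pstar x) ∧ min 1 ((m : ℝ) * pstar x) ≤ 1 := by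
      intro x
      exact ⟨le_min (by norm_num) (mul_nonneg (by positivity) (hp x).1), min_le_left _ _⟩
    have hle : ∀ x, r x ≤ min 1 ((m : ℝ) * pstar x) := by
      intro x
      apply le_min (hr x).2
      have hb : 1 + (m : ℕ) * (-(pstar x)) ≤ (1 + (-(pstar x))) ^ m :=
        one_add_mul_le_pow (by linarith [(hp x).2]) m
      have : (1 : ℝ) - (m : ℝ) * pstar x ≤ (1 - pstar x) ^ m := by
        calc (1 : ℝ) - (m : ℝ) * pstar x = 1 + (m : ℕ) * (-(pstar x)) := by push_cast; ring
          _ ≤ (1 + -(pstar x)) ^ m := hb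
          _ = (1 - pstar x) ^ m := by ring
      show 1 - (1 - pstar x) ^ m ≤ (m : ℝ) * pstar x
      linarith
    have h1 : 1 - mu r F ≤ (1 - mu pstar F) ^ m := sprinkle_pow hp hInc m
    have h2 : mu r F ≤ mu (fun x => min 1 ((m : ℝ) * pstar x)) F :=
      mu_mono hr hmin hle hInc
    have h3 : (1 - mu pstar F) ^ m ≤ (1 - ε) ^ m :=
      pow_le_pow_left₀ (by linarith) (by linarith) m
    linarith
  · -- part (ii)
    set q : X → ℝ := fun x => pstar x / m with hqdef
    have hq : ∀ x, 0 ≤ q x ∧ q x ≤ 1 := by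
      intro x
      obtain ⟨h1, h2⟩ := hp x
      constructor
      · exact div_nonneg h1 (by positivity)
      · rw [hqdef, div_le_one (by positivity)]
        linarith
    have hs := pow_bounds hq m
    have hle : ∀ x, 1 - (1 - q x) ^ m ≤ pstar x := by
      intro x
      have hb : 1 + (m : ℕ) * (-(q x)) ≤ (1 + (-(q x))) ^ m :=
        one_add_mul_le_pow (by linarith [(hq x).2]) m
      have hmq : (m : ℝ) * q x = pstar x := by
        rw [hqdef]; field_simp
      have h3 : (1 : ℝ) - (m : ℝ) * q x ≤ (1 - q x) ^ m := by
        calc (1 : ℝ) - (m : ℝ) * q x = 1 + (m : ℕ) * (-(q x)) := by push_cast; ring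
          _ ≤ (1 + -(q x)) ^ m := hb
          _ = (1 - q x) ^ m := by ring
      rw [hmq] at h3
      linarith
    have h1 : 1 - mu (fun x => 1 - (1 - q x) ^ m) F ≤ (1 - mu q F) ^ m :=
      sprinkle_pow hq hInc m
    have h2 : mu (fun x => 1 - (1 - q x) ^ m) F ≤ mu pstar F :=
      mu_mono hs hp hle hInc
    have ha0 : 0 ≤ 1 - mu q F := by linarith [mu_le_one hq F]
    have ham : ε ≤ (1 - mu q F) ^ m := by linarith
    have hroot : ε ^ ((1 : ℝ) / m) ≤ 1 - mu q F := by
      have hstep : ε ^ ((1 : ℝ) / m) ≤ ((1 - mu q F) ^ m) ^ ((1 : ℝ) / m) :=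
        Real.rpow_le_rpow (le_of_lt hε0) ham (by positivity)
      have heq : ((1 - mu q F) ^ m) ^ ((1 : ℝ) / m) = 1 - mu q F := by
        rw [← Real.rpow_natCast (1 - mu q F) m, ← Real.rpow_mul ha0]
        rw [show (m : ℝ) * ((1 : ℝ) / m) = 1 by field_simp]
        exact Real.rpow_one _
      linarith [heq ▸ hstep]
    linarith
end

section
/- Let d = (d_1,…,d_n) be a bi-valued degree sequence on [n] with n even, taking value d_1 on n_1 vertices and value d_2 < d_1 on n_2 = n − n_1 vertices. Let α > 0 and let x ∈ {1,2} be such that n_x = max(n_1,n_2), taking x = 1 if n_1 = n_2, and assume α·log n ≤ n_x (so that the capping at 1 in the Chung–Lu edge probabilities is immaterial). Then the graph spectrum 𝔊^α_PM(U_d, P_d) has a perfect matching if and only if d_x·d_2 / ‖d‖_1 ≥ α·log n / n_x. -/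
open Finset

/-- The set of (ordered representatives of) unordered pairs of distinct vertices. -/
def pairs (n : ℕ) : Finset (Fin n × Fin n) := Finset.univ.filter fun e => e.1 < e.2

/-- `M` is a perfect matching of the vertex set `Fin n`. -/
def IsPM {n : ℕ} (M : Finset (Fin n × Fin n)) : Prop :=
  M ⊆ pairs n ∧ ∀ v : Fin n, ∃! e : Fin n × Fin n, e ∈ M ∧ (v = e.1 ∨ v = e.2)

/-- The (deterministic) graph with adjacency predicate `adj` has a perfect matching. -/
def HasPMadj (n : ℕ) (adj : Fin n × Fin n → Prop) : Prop :=
  ∃ M : Finset (Fin n × Fin n), IsPM M ∧ ∀ e ∈ M, adj e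

/-- Degree parameter of a vertex for a bi-valued sequence: the first `n1` vertices get
`d1` and the rest get `d2`. -/
def bideg (n1 d1 d2 : ℕ) {n : ℕ} (v : Fin n) : ℕ := if v.val < n1 then d1 else d2

lemma pm_construct (n : ℕ) (hn : Even n) (hpos : 0 < n)
    (adj : Fin n × Fin n → Prop)
    (h : ∀ e : Fin n × Fin n, e.1.val < e.2.val → e.1.val + e.2.val = n - 1 → adj e) :
    HasPMadj n adj := by
  obtain ⟨r, hr⟩ := hn
  refine ⟨Finset.univ.filter (fun e => e.1 < e.2 ∧ e.1.val + e.2.val = n - 1), ⟨?_, ?_⟩, ?_⟩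
  · intro e he
    simp only [pairs, mem_filter, mem_univ, true_and] at he ⊢
    exact he.1
  · intro v
    have hv : v.val < n := v.isLt
    by_cases hlt : v.val < n - 1 - v.val
    · refine ⟨(v, ⟨n - 1 - v.val, by omega⟩), ⟨?_, Or.inl rfl⟩, ?_⟩
      · simp only [mem_filter, mem_univ, true_and, Fin.lt_def]
        exact ⟨hlt, by omega⟩
      · rintro ⟨a, b⟩ ⟨hab, hv'⟩
        simp only [mem_filter, mem_univ, true_and, Fin.lt_def] at hab
        obtain ⟨h1, h2⟩ := hab
        have hva : v = a ∨ v = b := hv'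
        have hvals : a.val = v.val ∧ b.val = n - 1 - v.val := by
          rcases hva with h | h
          · subst h; omega
          · subst h; omega
        have hb : b.val < n := b.isLt
        ext
        · simp; omega
        · simp; omega
    · have hne : v.val ≠ n - 1 - v.val := by omega
      have hlt' : n - 1 - v.val < v.val := by omega
      refine ⟨(⟨n - 1 - v.val, by omega⟩, v), ⟨?_, Or.inr rfl⟩, ?_⟩
      · simp only [mem_filter, mem_univ, true_and, Fin.lt_def]
        exact ⟨hlt', by omega⟩
      · rintro ⟨a, b⟩ ⟨hab, hv'⟩
        simp only [mem_filter, mem_univ, true_and, Fin.lt_def] at hab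
        obtain ⟨h1, h2⟩ := hab
        have hva : v = a ∨ v = b := hv'
        have hvals : b.val = v.val ∧ a.val = n - 1 - v.val := by
          rcases hva with h | h
          · subst h; omega
          · subst h; omega
        have hb : a.val < n := a.isLt
        ext
        · simp; omega
        · simp; omega
  · intro e he
    simp only [mem_filter, mem_univ, true_and, Fin.lt_def] at he
    exact h e he.1 he.2

lemma pm_cross (n n1 n2 : ℕ) (hn : n1 + n2 = n) (hn1 : 1 ≤ n1) (h12 : n1 < n2)
    (M : Finset (Fin n × Fin n)) (hM : IsPM M) :
    ∃ e ∈ M, n1 ≤ e.1.val ∧ n1 ≤ e.2.val := by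
  classical
  by_contra hc
  push_neg at hc
  have key : ∀ v : Fin n, ∃ u : Fin n, n1 ≤ v.val → u.val < n1 ∧
      ∃ e ∈ M, (v = e.1 ∧ u = e.2) ∨ (v = e.2 ∧ u = e.1) := by
    intro v
    by_cases hv : n1 ≤ v.val
    · obtain ⟨e, ⟨heM, hve⟩, _⟩ := hM.2 v
      rcases hve with h | h
      · refine ⟨e.2, fun _ => ⟨?_, e, heM, Or.inl ⟨h, rfl⟩⟩⟩
        have := hc e heM
        omega
      · refine ⟨e.1, fun _ => ⟨?_, e, heM, Or.inr ⟨h, rfl⟩⟩⟩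
        by_contra hu
        exact absurd (hc e heM (by omega)) (by omega)
    · exact ⟨v, fun h' => absurd h' hv⟩
  choose f hf using key
  set A : Finset (Fin n) := Finset.univ.filter (fun v => n1 ≤ v.val) with hA
  set B : Finset (Fin n) := Finset.univ.filter (fun v => v.val < n1) with hB
  have hmaps : ∀ v ∈ A, f v ∈ B := by
    intro v hv
    simp only [hA, mem_filter, mem_univ, true_and] at hv
    simp only [hB, mem_filter, mem_univ, true_and]
    exact (hf v hv).1
  have hinj : Set.InjOn f A := by
    intro v hvA w hwA hvw
    simp only [hA, mem_filter, mem_univ, true_and, coe_filter, Set.mem_setOf_eq] at hvA hwA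
    obtain ⟨hu1, e1, he1M, hp1⟩ := hf v hvA
    obtain ⟨hu2, e2, he2M, hp2⟩ := hf w hwA
    have huu : f w = f v := hvw.symm
    have he12 : e1 = e2 := by
      have h1 : e1 ∈ M ∧ (f v = e1.1 ∨ f v = e1.2) := by
        rcases hp1 with ⟨_, h⟩ | ⟨_, h⟩
        · exact ⟨he1M, Or.inr h⟩
        · exact ⟨he1M, Or.inl h⟩
      have h2 : e2 ∈ M ∧ (f v = e2.1 ∨ f v = e2.2) := by
        rw [hvw]
        rcases hp2 with ⟨_, h⟩ | ⟨_, h⟩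
        · exact ⟨he2M, Or.inr h⟩
        · exact ⟨he2M, Or.inl h⟩
      obtain ⟨e', _, huniq⟩ := hM.2 (f v)
      rw [huniq e1 h1, huniq e2 h2]
    subst he12
    -- now v and w are both endpoints of e1 distinct from f v
    have hfv : (f v).val < n1 := hu1
    rcases hp1 with ⟨h1a, h1b⟩ | ⟨h1a, h1b⟩ <;> rcases hp2 with ⟨h2a, h2b⟩ | ⟨h2a, h2b⟩
    · rw [h1a, h2a]
    · exfalso
      have a1 : v.val = e1.1.val := congrArg Fin.val h1a
      have a2 : (f w).val = e1.1.val := congrArg Fin.val h2b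
      omega
    · exfalso
      have a1 : v.val = e1.2.val := congrArg Fin.val h1a
      have a2 : (f w).val = e1.2.val := congrArg Fin.val h2b
      omega
    · rw [h1a, h2a]
  have hAB : A.card ≤ B.card := Finset.card_le_card_of_injOn f hmaps hinj
  have hABn : A.card + B.card = n := by
    have h := Finset.card_filter_add_card_filter_not
      (s := (Finset.univ : Finset (Fin n))) (p := fun v => n1 ≤ v.val)
    simp only [not_le, Finset.card_univ, Fintype.card_fin] at h
    exact h
  have hBn1 : B.card ≤ n1 := by
    have : B.card ≤ (Finset.univ : Finset (Fin n1)).card := by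
      apply Finset.card_le_card_of_injOn (fun v => ⟨v.val % n1, Nat.mod_lt _ (by omega)⟩)
      · intro v _; exact Finset.mem_univ _
      · intro v hv w hw hvw
        simp only [hB, mem_filter, mem_univ, true_and, coe_filter, Set.mem_setOf_eq] at hv hw
        have : v.val % n1 = w.val % n1 := by
          simpa [Fin.ext_iff] using hvw
        rw [Nat.mod_eq_of_lt hv, Nat.mod_eq_of_lt hw] at this
        exact Fin.ext this
    simpa using this
  omega

lemma adj_of (L D : ℝ) (hD : 0 < D) (m nx p q : ℕ) (hm : m = nx) (hpq : q ≤ p)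
    (hx : 0 < nx) (hcap : L ≤ (nx : ℝ)) (hmain : L / (nx : ℝ) ≤ (q : ℝ) / D) :
    L / (m : ℝ) ≤ min 1 ((p : ℝ) / D) := by
  subst hm
  have hx' : (0:ℝ) < (m : ℝ) := by exact_mod_cast hx
  refine le_min ?_ (hmain.trans ?_)
  · rw [div_le_one hx']; exact hcap
  · gcongr


lemma adj_rev (L D : ℝ) (hL : 0 ≤ L) (hD : 0 < D) (m nx p q : ℕ) (hm : m ≤ nx)
    (hpq : p ≤ q) (hx : 0 < m) (h : L / (m : ℝ) ≤ min 1 ((p : ℝ) / D)) :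
    L / (nx : ℝ) ≤ (q : ℝ) / D := by
  have hx' : (0:ℝ) < (m : ℝ) := by exact_mod_cast hx
  have h1 : L / (nx : ℝ) ≤ L / (m : ℝ) := by
    gcongr

  calc L / (nx : ℝ) ≤ L / (m : ℝ) := h1
    _ ≤ (p : ℝ) / D := h.trans (min_le_right _ _)
    _ ≤ (q : ℝ) / D := by
        gcongr

/-- For the bi-valued Chung–Lu model with `d2 < d1` (multiplicities `n1, n2`), and
`x` the index of a largest class (`x = 1` on ties), assuming `α·log n ≤ n_x`, the graph
spectrum `𝔊^α_PM(U_d, P_d)` has a perfect matching iff `d_x·d_2/‖d‖₁ ≥ α·log n / n_x`. -/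
theorem stmt9 (n n1 n2 d1 d2 : ℕ) (hn : n1 + n2 = n) (hne : Even n)
    (hn1 : 1 ≤ n1) (hn2 : 1 ≤ n2) (hd21 : d2 < d1) (hd2 : 1 ≤ d2)
    (α : ℝ) (hα : 0 < α)
    (hcap : α * Real.log n ≤ ((if n2 ≤ n1 then n1 else n2 : ℕ) : ℝ)) :
    HasPMadj n (fun e =>
      α * Real.log n /
          ((max (bideg n1 n1 n2 e.1) (bideg n1 n1 n2 e.2) : ℕ) : ℝ)
        ≤ min 1 (((bideg n1 d1 d2 e.1 * bideg n1 d1 d2 e.2 : ℕ) : ℝ) /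
            ((n1 * d1 + n2 * d2 : ℕ) : ℝ)))
    ↔ α * Real.log n / ((if n2 ≤ n1 then n1 else n2 : ℕ) : ℝ)
        ≤ (((if n2 ≤ n1 then d1 else d2) * d2 : ℕ) : ℝ) /
            ((n1 * d1 + n2 * d2 : ℕ) : ℝ) := by
  have hn2n : 2 ≤ n := by omega
  have hnpos : 0 < n := by omega
  have hL : 0 ≤ α * Real.log n := by
    apply mul_nonneg hα.le
    apply Real.log_nonneg
    exact_mod_cast hn2n.trans' (by norm_num)
  have hD : (0:ℝ) < ((n1 * d1 + n2 * d2 : ℕ) : ℝ) := by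
    have h0 : 0 < n1 * d1 + n2 * d2 :=
      Nat.lt_of_lt_of_le (Nat.mul_pos (by omega) (by omega) : 0 < n1 * d1)
        (Nat.le_add_right _ _)
    exact_mod_cast h0
  constructor
  · rintro ⟨M, hPM, hadj⟩
    by_cases hcase : n2 ≤ n1
    · simp only [if_pos hcase]
      have hvlt : n1 < n := by omega
      obtain ⟨e, ⟨heM, hve⟩, -⟩ := hPM.2 ⟨n1, hvlt⟩
      have hadje := hadj e heM
      refine adj_rev _ _ hL hD (max (bideg n1 n1 n2 e.1) (bideg n1 n1 n2 e.2)) n1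
        (bideg n1 d1 d2 e.1 * bideg n1 d1 d2 e.2) (d1 * d2) ?_ ?_ ?_ hadje
      · simp only [bideg]; split <;> split <;> omega
      · rcases hve with h | h
        · have hv1 : e.1.val = n1 := (congrArg Fin.val h).symm
          simp only [bideg, if_neg (by omega : ¬ e.1.val < n1)]
          split
          · exact le_of_eq (Nat.mul_comm d2 d1)
          · exact Nat.mul_le_mul hd21.le le_rfl
        · have hv2 : e.2.val = n1 := (congrArg Fin.val h).symm
          simp only [bideg, if_neg (by omega : ¬ e.2.val < n1)]
          split
          · exact le_rfl
          · exact Nat.mul_le_mul hd21.le le_rfl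
      · simp only [bideg]; split <;> split <;> omega
    · simp only [if_neg hcase]
      have h12 : n1 < n2 := by omega
      obtain ⟨e, heM, he1, he2⟩ := pm_cross n n1 n2 hn hn1 h12 M hPM
      have hadje := hadj e heM
      refine adj_rev _ _ hL hD (max (bideg n1 n1 n2 e.1) (bideg n1 n1 n2 e.2)) n2
        (bideg n1 d1 d2 e.1 * bideg n1 d1 d2 e.2) (d2 * d2) ?_ ?_ ?_ hadje
      · simp only [bideg]; split <;> split <;> omega
      · simp only [bideg, if_neg (by omega : ¬ e.1.val < n1),
          if_neg (by omega : ¬ e.2.val < n1)]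
        exact le_rfl
      · simp only [bideg]; split <;> split <;> omega
  · intro hmain
    apply pm_construct n hne hnpos
    intro e h12v hsum
    have he2n : e.2.val < n := e.2.isLt
    by_cases hcase : n2 ≤ n1
    · simp only [if_pos hcase] at hmain
      have he1 : e.1.val < n1 := by omega
      refine adj_of _ _ hD _ n1 _ (d1 * d2) ?_ ?_ (by omega) ?_ hmain
      · simp only [bideg, if_pos he1]; split <;> omega
      · simp only [bideg, if_pos he1]
        split
        · exact Nat.mul_le_mul le_rfl hd21.le
        · exact le_rfl
      · simpa [if_pos hcase] using hcap
    · simp only [if_neg hcase] at hmain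
      have he2 : ¬ e.2.val < n1 := by omega
      refine adj_of _ _ hD _ n2 _ (d2 * d2) ?_ ?_ (by omega) ?_ hmain
      · simp only [bideg, if_neg he2]; split <;> omega
      · simp only [bideg, if_neg he2]
        split
        · exact Nat.mul_le_mul hd21.le le_rfl
        · exact le_rfl
      · simpa [if_neg hcase] using hcap
end

section
/- Let d = d(n) be a sequence of bi-valued degree sequences on [n] (value d_1 with multiplicity n_1 and value d_2 < d_1 with multiplicity n_2 = n − n_1) such that n_1 ≥ n_2 and n_2 ≥ n^c for some fixed constant c > 0. If d_1·d_2/‖d‖_1 = o(log n / n), then a.a.s. the Chung–Lu random graph G_CL(n,d) contains an isolated vertex lying in U_2; consequently a.a.s. G_CL(n,d) has no perfect matching. -/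
set_option maxHeartbeats 1000000

open Finset Filter

def HasPM {n : ℕ} (A : Finset (Fin n × Fin n)) : Prop := ∃ M ⊆ A, IsPM M

open Classical in
noncomputable def probGraph (n : ℕ) (p : Fin n × Fin n → ℝ)
    (Q : Finset (Fin n × Fin n) → Prop) : ℝ :=
  ∑ A ∈ (pairs n).powerset,
    if Q A then (∏ e ∈ A, p e) * ∏ e ∈ pairs n \ A, (1 - p e) else 0

namespace CLaux

variable {E : Type*} [DecidableEq E]

open Classical in
noncomputable def pr (p : E → ℝ) (P : Finset E) (Q : Finset E → Prop) : ℝ :=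
  ∑ A ∈ P.powerset, if Q A then (∏ e ∈ A, p e) * ∏ e ∈ P \ A, (1 - p e) else 0

variable {p : E → ℝ} {P : Finset E}

lemma weight_nonneg (h0 : ∀ e, 0 ≤ p e) (h1 : ∀ e, p e ≤ 1) (A : Finset E) :
    0 ≤ (∏ e ∈ A, p e) * ∏ e ∈ P \ A, (1 - p e) := by
  apply mul_nonneg <;> apply Finset.prod_nonneg <;> intro e _
  · exact h0 e
  · linarith [h1 e]

lemma pr_nonneg (h0 : ∀ e, 0 ≤ p e) (h1 : ∀ e, p e ≤ 1) (Q : Finset E → Prop) :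
    0 ≤ pr p P Q := by
  classical
  apply Finset.sum_nonneg
  intro A _
  split
  · exact weight_nonneg h0 h1 A
  · exact le_refl 0

lemma pr_mono (h0 : ∀ e, 0 ≤ p e) (h1 : ∀ e, p e ≤ 1) {Q Q' : Finset E → Prop}
    (h : ∀ A, A ⊆ P → Q A → Q' A) : pr p P Q ≤ pr p P Q' := by
  classical
  apply Finset.sum_le_sum
  intro A hA
  rw [Finset.mem_powerset] at hA
  split
  · rw [if_pos (h A hA ‹_›)]
  · split
    · exact weight_nonneg h0 h1 A
    · exact le_refl 0

lemma pr_congr {Q Q' : Finset E → Prop} (h : ∀ A, A ⊆ P → (Q A ↔ Q' A)) :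
    pr p P Q = pr p P Q' := by
  classical
  apply Finset.sum_congr rfl
  intro A hA
  rw [Finset.mem_powerset] at hA
  rw [if_congr (h A hA) rfl rfl]

lemma pr_true : pr p P (fun _ => True) = 1 := by
  classical
  have h := Finset.prod_add p (fun e => 1 - p e) P
  simp only [add_sub_cancel, Finset.prod_const_one] at h
  rw [pr]
  simp only [if_pos trivial]
  rw [← h]

lemma pr_false : pr p P (fun _ => False) = 0 := by
  simp [pr]

lemma pr_le_one (h0 : ∀ e, 0 ≤ p e) (h1 : ∀ e, p e ≤ 1) (Q : Finset E → Prop) :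
    pr p P Q ≤ 1 := by
  rw [← pr_true (p := p) (P := P)]
  exact pr_mono h0 h1 (fun A _ _ => trivial)

lemma pr_compl (Q : Finset E → Prop) :
    pr p P Q + pr p P (fun A => ¬ Q A) = 1 := by
  classical
  rw [← pr_true (p := p) (P := P), pr, pr, pr, ← Finset.sum_add_distrib]
  apply Finset.sum_congr rfl
  intro A _
  by_cases h : Q A <;> simp [h]

lemma pr_or_le (h0 : ∀ e, 0 ≤ p e) (h1 : ∀ e, p e ≤ 1) (Q Q' : Finset E → Prop) :
    pr p P (fun A => Q A ∨ Q' A) ≤ pr p P Q + pr p P Q' := by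
  classical
  rw [pr, pr, pr, ← Finset.sum_add_distrib]
  apply Finset.sum_le_sum
  intro A _
  have hw := weight_nonneg (P := P) h0 h1 A
  split_ifs <;> simp_all <;> linarith


lemma sdiff_split {U B C : Finset E} (hU : U ⊆ P) (hB : B ⊆ U) (hC : C ⊆ P \ U) :
    P \ (B ∪ C) = (U \ B) ∪ ((P \ U) \ C) := by
  ext e
  simp only [Finset.mem_sdiff, Finset.mem_union, not_or]
  constructor
  · rintro ⟨heP, hnB, hnC⟩
    by_cases heU : e ∈ U
    · exact Or.inl ⟨heU, hnB⟩
    · exact Or.inr ⟨⟨heP, heU⟩, hnC⟩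
  · rintro (⟨heU, hnB⟩ | ⟨⟨heP, hnU⟩, hnC⟩)
    · exact ⟨hU heU, hnB, fun hC' => (Finset.mem_sdiff.1 (hC hC')).2 heU⟩
    · exact ⟨heP, fun hB' => hnU (hB hB'), hnC⟩

lemma union_inter_left {U B C : Finset E} (hB : B ⊆ U) (hC : C ⊆ P \ U) :
    (B ∪ C) ∩ U = B := by
  ext e
  simp only [Finset.mem_inter, Finset.mem_union]
  constructor
  · rintro ⟨hBC | hC', heU⟩
    · exact hBC
    · exact absurd heU (Finset.mem_sdiff.1 (hC hC')).2
  · exact fun h => ⟨Or.inl h, hB h⟩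

lemma union_sdiff_right {U B C : Finset E} (hB : B ⊆ U) (hC : C ⊆ P \ U) :
    (B ∪ C) \ U = C := by
  ext e
  simp only [Finset.mem_sdiff, Finset.mem_union]
  constructor
  · rintro ⟨hBC | hC', hnU⟩
    · exact absurd (hB hBC) hnU
    · exact hC'
  · exact fun h => ⟨Or.inr h, (Finset.mem_sdiff.1 (hC h)).2⟩

lemma inter_union_sdiff_self (A U : Finset E) : (A ∩ U) ∪ (A \ U) = A := by
  ext e; simp only [Finset.mem_union, Finset.mem_inter, Finset.mem_sdiff]; tauto

lemma weight_split {U B C : Finset E} (hU : U ⊆ P) (hB : B ⊆ U) (hC : C ⊆ P \ U) :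
    (∏ e ∈ B ∪ C, p e) * ∏ e ∈ P \ (B ∪ C), (1 - p e)
      = ((∏ e ∈ B, p e) * ∏ e ∈ U \ B, (1 - p e))
        * ((∏ e ∈ C, p e) * ∏ e ∈ (P \ U) \ C, (1 - p e)) := by
  have hdBC : Disjoint B C := Finset.disjoint_sdiff.mono hB hC
  have hd2 : Disjoint (U \ B) ((P \ U) \ C) :=
    Finset.disjoint_sdiff.mono Finset.sdiff_subset Finset.sdiff_subset
  rw [Finset.prod_union hdBC, sdiff_split hU hB hC, Finset.prod_union hd2]
  ring

open Classical in
lemma pr_split {U : Finset E} (hU : U ⊆ P) (Q : Finset E → Prop) :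
    pr p P Q = ∑ B ∈ U.powerset,
      ((∏ e ∈ B, p e) * ∏ e ∈ U \ B, (1 - p e)) * pr p (P \ U) (fun C => Q (B ∪ C)) := by
  classical
  have hstep : ∀ B ∈ U.powerset,
      ((∏ e ∈ B, p e) * ∏ e ∈ U \ B, (1 - p e)) * pr p (P \ U) (fun C => Q (B ∪ C))
        = ∑ C ∈ (P \ U).powerset, if Q (B ∪ C) then
            ((∏ e ∈ B, p e) * ∏ e ∈ U \ B, (1 - p e)) *
            ((∏ e ∈ C, p e) * ∏ e ∈ (P \ U) \ C, (1 - p e)) else 0 := by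
    intro B _
    rw [pr, Finset.mul_sum]
    exact Finset.sum_congr rfl fun C _ => by rw [mul_ite, mul_zero]
  rw [Finset.sum_congr rfl hstep, ← Finset.sum_product']
  apply Finset.sum_nbij' (i := fun A => (A ∩ U, A \ U)) (j := fun x => x.1 ∪ x.2)
  · intro A hA
    rw [Finset.mem_powerset] at hA
    rw [Finset.mem_product]
    refine ⟨Finset.mem_powerset.2 Finset.inter_subset_right,
      Finset.mem_powerset.2 fun e he => ?_⟩
    rw [Finset.mem_sdiff] at he ⊢
    exact ⟨hA he.1, he.2⟩
  · intro x hx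
    rw [Finset.mem_product, Finset.mem_powerset, Finset.mem_powerset] at hx
    rw [Finset.mem_powerset]
    intro e he
    rcases Finset.mem_union.1 he with h | h
    · exact hU (hx.1 h)
    · exact (Finset.mem_sdiff.1 (hx.2 h)).1
  · intro A _
    exact inter_union_sdiff_self A U
  · intro x hx
    rw [Finset.mem_product, Finset.mem_powerset, Finset.mem_powerset] at hx
    exact Prod.ext (union_inter_left hx.1 hx.2) (union_sdiff_right hx.1 hx.2)
  · intro A hA
    rw [Finset.mem_powerset] at hA
    have hBC : (A ∩ U) ∪ (A \ U) = A := inter_union_sdiff_self A U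
    have hsub : A \ U ⊆ P \ U := fun e he => by
      rw [Finset.mem_sdiff] at he ⊢; exact ⟨hA he.1, he.2⟩
    have hw := weight_split (p := p) (B := A ∩ U) (C := A \ U) hU Finset.inter_subset_right hsub
    rw [hBC] at hw
    simp only [hBC, hw]

lemma pr_eq_empty (U : Finset E) : pr p U (fun B => B = ∅) = ∏ e ∈ U, (1 - p e) := by
  classical
  rw [pr]
  rw [Finset.sum_eq_single_of_mem ∅ (Finset.mem_powerset.2 (Finset.empty_subset _))]
  · simp
  · intro b _ hb
    rw [if_neg hb]

lemma pr_nonempty (h0 : ∀ e, 0 ≤ p e) (h1 : ∀ e, p e ≤ 1) (U : Finset E) :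
    pr p U (fun B => B.Nonempty) = 1 - ∏ e ∈ U, (1 - p e) := by
  have hc := pr_compl (p := p) (P := U) (fun B => B.Nonempty)
  have he : pr p U (fun B => ¬ B.Nonempty) = ∏ e ∈ U, (1 - p e) := by
    rw [pr_congr (Q' := fun B => B = ∅), pr_eq_empty]
    intro A _
    exact Finset.not_nonempty_iff_eq_empty
  linarith

lemma pr_prod {ι : Type*} [DecidableEq ι] (S : Finset ι) (T : ι → Finset E) :
    ∀ (P : Finset E), (∀ i ∈ S, T i ⊆ P) →
    (∀ i ∈ S, ∀ j ∈ S, i ≠ j → Disjoint (T i) (T j)) →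
    (∀ e, 0 ≤ p e) → (∀ e, p e ≤ 1) →
    pr p P (fun A => ∀ i ∈ S, (A ∩ T i).Nonempty)
      = ∏ i ∈ S, (1 - ∏ e ∈ T i, (1 - p e)) := by
  classical
  induction S using Finset.induction_on with
  | empty =>
    intro P _ _ _ _
    rw [pr_congr (Q' := fun _ => True), pr_true, Finset.prod_empty]
    intro A _
    simp
  | @insert j S hjS ih =>
    intro P hsub hdisj h0 h1
    have hUP : T j ⊆ P := hsub j (Finset.mem_insert_self j S)
    rw [pr_split hUP]
    have hstep : ∀ B ∈ (T j).powerset,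
        ((∏ e ∈ B, p e) * ∏ e ∈ (T j) \ B, (1 - p e)) *
          pr p (P \ T j) (fun C => ∀ i ∈ insert j S, ((B ∪ C) ∩ T i).Nonempty)
        = (if B.Nonempty then ((∏ e ∈ B, p e) * ∏ e ∈ (T j) \ B, (1 - p e)) else 0) *
            ∏ i ∈ S, (1 - ∏ e ∈ T i, (1 - p e)) := by
      intro B hB
      rw [Finset.mem_powerset] at hB
      have hcongr : ∀ C, C ⊆ P \ T j →
          ((∀ i ∈ insert j S, ((B ∪ C) ∩ T i).Nonempty) ↔
            (B.Nonempty ∧ ∀ i ∈ S, (C ∩ T i).Nonempty)) := by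
        intro C hC
        have hBj : (B ∪ C) ∩ T j = B := union_inter_left hB hC
        have hCi : ∀ i ∈ S, (B ∪ C) ∩ T i = C ∩ T i := by
          intro i hi
          have hd : Disjoint B (T i) := by
            refine Finset.disjoint_left.2 fun e heB heTi => ?_
            have := hdisj j (Finset.mem_insert_self j S) i (Finset.mem_insert_of_mem hi)
              (fun h => hjS (h ▸ hi))
            exact Finset.disjoint_left.1 this (hB heB) heTi
          rw [Finset.union_inter_distrib_right, Finset.disjoint_iff_inter_eq_empty.1 hd,
            Finset.empty_union]
        rw [Finset.forall_mem_insert, hBj]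
        constructor
        · rintro ⟨h₁, h₂⟩
          exact ⟨h₁, fun i hi => (hCi i hi) ▸ h₂ i hi⟩
        · rintro ⟨h₁, h₂⟩
          exact ⟨h₁, fun i hi => (hCi i hi).symm ▸ h₂ i hi⟩
      rw [pr_congr hcongr]
      by_cases hBne : B.Nonempty
      · rw [if_pos hBne]
        have : pr p (P \ T j) (fun C => B.Nonempty ∧ ∀ i ∈ S, (C ∩ T i).Nonempty)
            = pr p (P \ T j) (fun C => ∀ i ∈ S, (C ∩ T i).Nonempty) := by
          apply pr_congr
          intro A _
          simp [hBne]
        rw [this, ih (P \ T j) (fun i hi => Finset.subset_sdiff.2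
            ⟨hsub i (Finset.mem_insert_of_mem hi),
             hdisj i (Finset.mem_insert_of_mem hi) j (Finset.mem_insert_self j S)
              (fun h => hjS (h ▸ hi))⟩)
          (fun i hi i' hi' hne => hdisj i (Finset.mem_insert_of_mem hi) i'
            (Finset.mem_insert_of_mem hi') hne) h0 h1]
      · rw [if_neg hBne]
        have : pr p (P \ T j) (fun C => B.Nonempty ∧ ∀ i ∈ S, (C ∩ T i).Nonempty)
            = pr p (P \ T j) (fun _ => False) := by
          apply pr_congr
          intro A _
          simp [hBne]
        rw [this, pr_false, mul_zero, zero_mul]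
    rw [Finset.sum_congr rfl hstep, ← Finset.sum_mul]
    have hsum : (∑ B ∈ (T j).powerset,
        if B.Nonempty then ((∏ e ∈ B, p e) * ∏ e ∈ (T j) \ B, (1 - p e)) else 0)
        = pr p (T j) (fun B => B.Nonempty) := by
      rw [pr]
      exact Finset.sum_congr rfl fun A _ => by congr
    rw [hsum, pr_nonempty h0 h1, Finset.prod_insert hjS]

open Classical in
lemma pr_exists_le {ι : Type*} (s : Finset ι) (R : ι → Finset E → Prop)
    (h0 : ∀ e, 0 ≤ p e) (h1 : ∀ e, p e ≤ 1) :
    pr p P (fun A => ∃ i ∈ s, R i A) ≤ ∑ i ∈ s, pr p P (R i) := by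
  classical
  simp only [pr]
  rw [Finset.sum_comm]
  apply Finset.sum_le_sum
  intro A _
  by_cases h : ∃ i ∈ s, R i A
  · rw [if_pos h]
    obtain ⟨i, his, hRi⟩ := h
    have hle := Finset.single_le_sum
      (f := fun i => if R i A then (∏ e ∈ A, p e) * ∏ e ∈ P \ A, (1 - p e) else 0)
      (fun i _ => by
        split
        · exact weight_nonneg h0 h1 A
        · exact le_refl 0) his
    simpa [hRi] using hle
  · rw [if_neg h]
    apply Finset.sum_nonneg
    intro i _
    split
    · exact weight_nonneg h0 h1 A
    · exact le_refl 0

lemma pr_mem {e : E} (he : e ∈ P) : pr p P (fun A => e ∈ A) = p e := by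
  classical
  rw [pr_split (U := {e}) (Finset.singleton_subset_iff.2 he)]
  have hpow : ({e} : Finset E).powerset = {∅, {e}} := by
    ext B
    simp [Finset.mem_powerset, Finset.subset_singleton_iff]
  rw [hpow, Finset.sum_insert (by simp only [Finset.mem_singleton]; exact fun h => (Finset.singleton_ne_empty e) h.symm), Finset.sum_singleton]
  have h1 : pr p (P \ {e}) (fun C => e ∈ (∅ : Finset E) ∪ C) = 0 := by
    rw [pr_congr (Q' := fun _ => False), pr_false]
    intro A hA
    simp only [Finset.empty_union, iff_false]
    intro heA
    exact (Finset.mem_sdiff.1 (hA heA)).2 (Finset.mem_singleton_self e)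
  have h2 : pr p (P \ {e}) (fun C => e ∈ ({e} : Finset E) ∪ C) = 1 := by
    rw [pr_congr (Q' := fun _ => True), pr_true]
    intro A _
    simp
  rw [h1, h2]
  simp

lemma mem_pairs {n : ℕ} {e : Fin n × Fin n} : e ∈ pairs n ↔ e.1 < e.2 := by
  simp [pairs]

lemma key_bound {n : ℕ} (p : Fin n × Fin n → ℝ) (h0 : ∀ e, 0 ≤ p e) (h1 : ∀ e, p e ≤ 1)
    (n1 m : ℕ) (hm1 : 1 ≤ m) (hmn : n1 + m ≤ n) (q : ℝ) (hq0 : 0 ≤ q) (hq1 : q ≤ 1)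
    (hp : ∀ e : Fin n × Fin n, n1 ≤ e.1.val ∨ n1 ≤ e.2.val → p e ≤ q) :
    pr p (pairs n) (fun A => ¬ ∃ v : Fin n, n1 ≤ v.val ∧ ∀ e ∈ A, e.1 ≠ v ∧ e.2 ≠ v)
      ≤ (m : ℝ)^2 * q + (1 - (1-q)^n)^m := by
  classical
  have hn0 : 0 < n := by omega
  set S : Finset (Fin n) := Finset.univ.filter (fun v => n1 ≤ v.val ∧ v.val < n1 + m) with hS
  have hSmem : ∀ v : Fin n, v ∈ S ↔ (n1 ≤ v.val ∧ v.val < n1 + m) := by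
    intro v; simp [hS]
  set T0 : Finset (Fin n × Fin n) := (pairs n).filter (fun e => e.1 ∈ S ∧ e.2 ∈ S) with hT0
  set T : Fin n → Finset (Fin n × Fin n) :=
    fun v => (pairs n).filter (fun e => (e.1 = v ∧ e.2 ∉ S) ∨ (e.2 = v ∧ e.1 ∉ S)) with hT
  have hTmem : ∀ v (e : Fin n × Fin n), e ∈ T v ↔
      (e ∈ pairs n ∧ ((e.1 = v ∧ e.2 ∉ S) ∨ (e.2 = v ∧ e.1 ∉ S))) := by
    intro v e; simp [hT]
  have hcardS_le : S.card ≤ m := by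
    have := Finset.card_le_card_of_injOn (fun v : Fin n => v.val - n1)
      (t := Finset.range m)
      (fun v hv => by
        rw [Finset.mem_coe, Finset.mem_range]
        have := (hSmem v).1 (Finset.mem_coe.1 hv)
        dsimp only
        omega)
      (fun v hv w hw hvw => by
        have hv' := (hSmem v).1 (Finset.mem_coe.1 hv)
        have hw' := (hSmem w).1 (Finset.mem_coe.1 hw)
        dsimp only at hvw
        exact Fin.ext (by omega))
    simpa using this
  have hcardS_ge : m ≤ S.card := by
    have := Finset.card_le_card_of_injOn
      (fun k : ℕ => (⟨(n1 + k) % n, Nat.mod_lt _ hn0⟩ : Fin n))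
      (s := Finset.range m) (t := S)
      (fun k hk => by
        rw [Finset.mem_coe, Finset.mem_range] at hk
        rw [Finset.mem_coe, hSmem]
        simp only
        rw [Nat.mod_eq_of_lt (by omega)]
        omega)
      (fun a ha b hb hab => by
        simp only [Finset.coe_range, Set.mem_Iio] at ha hb
        have := congrArg Fin.val hab
        simp only [Nat.mod_eq_of_lt (show n1 + a < n by omega),
          Nat.mod_eq_of_lt (show n1 + b < n by omega)] at this
        omega)
    simpa using this
  have hTsub : ∀ v, T v ⊆ pairs n := fun v => Finset.filter_subset _ _
  have hTdisj : ∀ v ∈ S, ∀ w ∈ S, v ≠ w → Disjoint (T v) (T w) := by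
    intro v hv w hw hvw
    rw [Finset.disjoint_left]
    intro e hev hew
    obtain ⟨-, h1' | h1'⟩ := (hTmem v e).1 hev <;>
      obtain ⟨-, h2' | h2'⟩ := (hTmem w e).1 hew
    · exact hvw (h1'.1.symm.trans h2'.1)
    · exact h2'.2 (h1'.1 ▸ hv)
    · exact h1'.2 (h2'.1 ▸ hw)
    · exact hvw (h1'.1.symm.trans h2'.1)
  -- implication
  have himp : ∀ A : Finset (Fin n × Fin n), A ⊆ pairs n →
      (¬ ∃ v : Fin n, n1 ≤ v.val ∧ ∀ e ∈ A, e.1 ≠ v ∧ e.2 ≠ v) →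
      ((A ∩ T0).Nonempty ∨ ∀ v ∈ S, (A ∩ T v).Nonempty) := by
    intro A hA hno
    push_neg at hno
    by_cases hT0A : (A ∩ T0).Nonempty
    · exact Or.inl hT0A
    · refine Or.inr fun v hv => ?_
      obtain ⟨hv1, _⟩ := (hSmem v).1 hv
      obtain ⟨e, heA, he⟩ := hno v hv1
      have hepairs := hA heA
      refine ⟨e, Finset.mem_inter.2 ⟨heA, (hTmem v e).2 ⟨hepairs, ?_⟩⟩⟩
      rcases eq_or_ne e.1 v with h | h
      · left
        refine ⟨h, fun he2S => ?_⟩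
        exact hT0A ⟨e, Finset.mem_inter.2 ⟨heA,
          Finset.mem_filter.2 ⟨hepairs, h ▸ hv, he2S⟩⟩⟩
      · right
        have h2 : e.2 = v := he h
        refine ⟨h2, fun he1S => ?_⟩
        exact hT0A ⟨e, Finset.mem_inter.2 ⟨heA,
          Finset.mem_filter.2 ⟨hepairs, he1S, h2 ▸ hv⟩⟩⟩
  have step1 : pr p (pairs n) (fun A => ¬ ∃ v : Fin n, n1 ≤ v.val ∧ ∀ e ∈ A, e.1 ≠ v ∧ e.2 ≠ v)
      ≤ pr p (pairs n) (fun A => (A ∩ T0).Nonempty)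
        + pr p (pairs n) (fun A => ∀ v ∈ S, (A ∩ T v).Nonempty) := by
    refine le_trans (pr_mono h0 h1 himp) (pr_or_le h0 h1 _ _)
  -- T0 part
  have hcardT0 : (T0.card : ℝ) ≤ (m : ℝ)^2 := by
    have hsub : T0 ⊆ S ×ˢ S := by
      intro e he
      obtain ⟨-, h1', h2'⟩ := Finset.mem_filter.1 he
      exact Finset.mem_product.2 ⟨h1', h2'⟩
    have := (Finset.card_le_card hsub).trans (le_of_eq (Finset.card_product S S))
    have h2 : T0.card ≤ m * m := this.trans (Nat.mul_le_mul hcardS_le hcardS_le)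
    calc (T0.card : ℝ) ≤ (m * m : ℕ) := by exact_mod_cast h2
      _ = (m : ℝ)^2 := by push_cast; ring
  have stepT0 : pr p (pairs n) (fun A => (A ∩ T0).Nonempty) ≤ (m : ℝ)^2 * q := by
    have hcg : pr p (pairs n) (fun A => (A ∩ T0).Nonempty)
        = pr p (pairs n) (fun A => ∃ e ∈ T0, e ∈ A) := by
      apply pr_congr
      intro A _
      constructor
      · rintro ⟨e, he⟩
        rw [Finset.mem_inter] at he
        exact ⟨e, he.2, he.1⟩
      · rintro ⟨e, heT, heA⟩
        exact ⟨e, Finset.mem_inter.2 ⟨heA, heT⟩⟩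
    rw [hcg]
    calc pr p (pairs n) (fun A => ∃ e ∈ T0, e ∈ A)
        ≤ ∑ e ∈ T0, pr p (pairs n) (fun A => e ∈ A) := pr_exists_le T0 _ h0 h1
      _ = ∑ e ∈ T0, p e := Finset.sum_congr rfl fun e he =>
          pr_mem (Finset.filter_subset _ _ he)
      _ ≤ ∑ _e ∈ T0, q := Finset.sum_le_sum fun e he => by
          obtain ⟨-, h1', -⟩ := Finset.mem_filter.1 he
          exact hp e (Or.inl ((hSmem e.1).1 h1').1)
      _ = T0.card * q := by rw [Finset.sum_const, nsmul_eq_mul]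
      _ ≤ (m : ℝ)^2 * q := mul_le_mul_of_nonneg_right hcardT0 hq0
  -- product part
  have hcardT : ∀ v ∈ S, (T v).card ≤ n := by
    intro v _
    have := Finset.card_le_card_of_injOn
      (fun e : Fin n × Fin n => if e.1 = v then e.2 else e.1)
      (t := (Finset.univ : Finset (Fin n)))
      (fun e _ => Finset.mem_univ _)
      (fun e he f hf hef => by
        obtain ⟨hep, he'⟩ := (hTmem v e).1 (Finset.mem_coe.1 he)
        obtain ⟨hfp, hf'⟩ := (hTmem v f).1 (Finset.mem_coe.1 hf)
        rw [mem_pairs] at hep hfp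
        simp only at hef
        rcases he' with ⟨he1, -⟩ | ⟨he2, he1⟩ <;> rcases hf' with ⟨hf1, -⟩ | ⟨hf2, hf1⟩
        · rw [if_pos he1, if_pos hf1] at hef
          exact Prod.ext (he1.trans hf1.symm) hef
        · have hfne : f.1 ≠ v := by
            intro h
            rw [h, hf2] at hfp
            exact lt_irrefl v hfp
          rw [if_pos he1, if_neg hfne] at hef
          -- e = (v, e.2), f = (f.1, v), e.2 = f.1 ; v < e.2 = f.1 < f.2 = v
          exfalso
          have h1 : v < e.2 := he1 ▸ hep
          have h2 : f.1 < v := hf2 ▸ hfp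
          rw [hef] at h1
          exact absurd (h1.trans h2) (lt_irrefl _)
        · have hene : e.1 ≠ v := by
            intro h
            rw [h, he2] at hep
            exact lt_irrefl v hep
          rw [if_neg hene, if_pos hf1] at hef
          exfalso
          have h1 : v < f.2 := hf1 ▸ hfp
          have h2 : e.1 < v := he2 ▸ hep
          rw [← hef] at h1
          exact absurd (h1.trans h2) (lt_irrefl _)
        · have hene : e.1 ≠ v := by
            intro h
            rw [h, he2] at hep
            exact lt_irrefl v hep
          have hfne : f.1 ≠ v := by
            intro h
            rw [h, hf2] at hfp
            exact lt_irrefl v hfp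
          rw [if_neg hene, if_neg hfne] at hef
          exact Prod.ext hef (he2.trans hf2.symm))
    simpa using this
  have hfac : ∀ v ∈ S, (1 - (1-q)^n) ≥ 1 - ∏ e ∈ T v, (1 - p e) ∧
      0 ≤ 1 - ∏ e ∈ T v, (1 - p e) := by
    intro v hv
    have hple : ∀ e ∈ T v, p e ≤ q := by
      intro e he
      obtain ⟨-, h' | h'⟩ := (hTmem v e).1 he
      · exact hp e (Or.inl (h'.1 ▸ ((hSmem v).1 hv).1))
      · exact hp e (Or.inr (h'.1 ▸ ((hSmem v).1 hv).1))
    have hlow : (1-q)^n ≤ ∏ e ∈ T v, (1 - p e) := by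
      calc (1-q)^n ≤ (1-q)^((T v).card) :=
            pow_le_pow_of_le_one (by linarith) (by linarith) (hcardT v hv)
        _ = ∏ _e ∈ T v, (1-q) := by rw [Finset.prod_const]
        _ ≤ ∏ e ∈ T v, (1 - p e) := Finset.prod_le_prod
            (fun e _ => by linarith) (fun e he => by linarith [hple e he])
    have hup : ∏ e ∈ T v, (1 - p e) ≤ 1 :=
      Finset.prod_le_one (fun e _ => by linarith [h1 e]) (fun e _ => by linarith [h0 e])
    exact ⟨by linarith, by linarith⟩
  have stepProd : pr p (pairs n) (fun A => ∀ v ∈ S, (A ∩ T v).Nonempty)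
      ≤ (1 - (1-q)^n)^m := by
    rw [pr_prod S T (pairs n) (fun v _ => hTsub v) hTdisj h0 h1]
    have hq' : 0 ≤ 1 - (1-q)^n := by
      have : (1-q)^n ≤ 1 := pow_le_one₀ (by linarith) (by linarith)
      linarith
    calc ∏ v ∈ S, (1 - ∏ e ∈ T v, (1 - p e))
        ≤ ∏ _v ∈ S, (1 - (1-q)^n) := Finset.prod_le_prod
          (fun v hv => (hfac v hv).2) (fun v hv => (hfac v hv).1)
      _ = (1 - (1-q)^n)^(S.card) := by rw [Finset.prod_const]
      _ ≤ (1 - (1-q)^n)^m := pow_le_pow_of_le_one hq' (by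
          have : 0 ≤ (1-q)^n := pow_nonneg (by linarith) n
          linarith) hcardS_ge
  linarith [step1, stepT0, stepProd]

lemma exp_neg_two_mul_le {x : ℝ} (hx0 : 0 ≤ x) (hx1 : x ≤ 1/2) :
    Real.exp (-(2*x)) ≤ 1 - x := by
  have h1 : 1 + 2*x ≤ Real.exp (2*x) := by linarith [Real.add_one_le_exp (2*x)]
  have h2 : (0:ℝ) < 1 + 2*x := by linarith
  have h3 : (Real.exp (2*x))⁻¹ ≤ (1 + 2*x)⁻¹ := inv_anti₀ h2 h1
  have h4 : (1 + 2*x)⁻¹ ≤ 1 - x := by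
    rw [inv_le_iff_one_le_mul₀ h2]
    nlinarith
  rw [Real.exp_neg]
  linarith

lemma one_sub_le_exp_neg (x : ℝ) : 1 - x ≤ Real.exp (-x) := by
  linarith [Real.add_one_le_exp (-x)]

theorem badprob_tendsto (n1 n2 d1 d2 : ℕ → ℕ) (hn : ∀ n, n1 n + n2 n = n)
    (hbv : ∀ n, d2 n < d1 n) (hd2 : ∀ n, 1 ≤ d2 n)
    (c : ℝ) (hc : 0 < c)
    (hn2 : ∀ᶠ n : ℕ in atTop, ((n : ℝ)) ^ c ≤ (n2 n : ℝ))
    (hsmall : Tendsto (fun n =>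
        (((d1 n * d2 n : ℕ) : ℝ) / ((n1 n * d1 n + n2 n * d2 n : ℕ) : ℝ)) /
          (Real.log n / (n : ℝ))) atTop (nhds 0)) :
    Tendsto (fun n => pr
        (fun e : Fin n × Fin n => min 1 (((bideg (n1 n) (d1 n) (d2 n) e.1 *
              bideg (n1 n) (d1 n) (d2 n) e.2 : ℕ) : ℝ) /
            ((n1 n * d1 n + n2 n * d2 n : ℕ) : ℝ)))
        (pairs n)
        (fun A => ¬ ∃ v : Fin n, n1 n ≤ v.val ∧ ∀ e ∈ A, e.1 ≠ v ∧ e.2 ≠ v))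
      atTop (nhds 0) := by
  classical
  set γ : ℝ := min c 1 / 4 with hγdef
  have hmin : 0 < min c 1 := lt_min hc one_pos
  have hminle : min c 1 ≤ 1 := min_le_right _ _
  have hminc : min c 1 ≤ c := min_le_left _ _
  have hγpos : 0 < γ := by rw [hγdef]; linarith
  have hγle : γ ≤ 1/4 := by rw [hγdef]; linarith
  have hγc : 2*γ ≤ c := by rw [hγdef]; linarith
  set r : ℕ → ℝ := fun n =>
      (((d1 n * d2 n : ℕ) : ℝ) / ((n1 n * d1 n + n2 n * d2 n : ℕ) : ℝ)) /
        (Real.log n / (n : ℝ)) with hrdef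
  set B : ℕ → ℝ := fun n =>
      4 * r n * (Real.log n * (n:ℝ)^(2*γ-1)) + Real.exp (-(n:ℝ)^(γ/2)) with hBdef
  have h0 : ∀ n (e : Fin n × Fin n), 0 ≤ min 1 (((bideg (n1 n) (d1 n) (d2 n) e.1 *
      bideg (n1 n) (d1 n) (d2 n) e.2 : ℕ) : ℝ) / ((n1 n * d1 n + n2 n * d2 n : ℕ) : ℝ)) := by
    intro n e
    exact le_min zero_le_one (div_nonneg (Nat.cast_nonneg _) (Nat.cast_nonneg _))
  have h1 : ∀ n (e : Fin n × Fin n), (min 1 (((bideg (n1 n) (d1 n) (d2 n) e.1 *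
      bideg (n1 n) (d1 n) (d2 n) e.2 : ℕ) : ℝ) / ((n1 n * d1 n + n2 n * d2 n : ℕ) : ℝ))) ≤ 1 :=
    fun n e => min_le_left _ _
  have hTB : Tendsto B atTop (nhds 0) := by
    have h12 : (0:ℝ) < 1 - 2*γ := by linarith
    have hT1 : Tendsto (fun n : ℕ => Real.log n * (n:ℝ)^(2*γ-1)) atTop (nhds 0) := by
      have hdiv := (isLittleO_log_rpow_atTop h12).tendsto_div_nhds_zero
      have hcomp := hdiv.comp (tendsto_natCast_atTop_atTop (R := ℝ))
      apply hcomp.congr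
      intro n
      simp only [Function.comp_apply]
      rw [show (2*γ-1 : ℝ) = -(1-2*γ) by ring, Real.rpow_neg (Nat.cast_nonneg n),
        div_eq_mul_inv]
    have hT1' : Tendsto (fun n : ℕ => 4 * r n * (Real.log n * (n:ℝ)^(2*γ-1)))
        atTop (nhds 0) := by
      have h4r : Tendsto (fun n => 4 * r n) atTop (nhds 0) := by
        have h' := hsmall.const_mul (4:ℝ)
        rw [mul_zero] at h'
        exact h'
      simpa using h4r.mul hT1
    have hT2 : Tendsto (fun n : ℕ => Real.exp (-(n:ℝ)^(γ/2))) atTop (nhds 0) := by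
      have hpow : Tendsto (fun n : ℕ => (n:ℝ)^(γ/2)) atTop atTop :=
        (tendsto_rpow_atTop (by linarith)).comp (tendsto_natCast_atTop_atTop (R := ℝ))
      exact Real.tendsto_exp_atBot.comp (tendsto_neg_atTop_atBot.comp hpow)
    rw [hBdef]
    simpa using hT1'.add hT2
  apply squeeze_zero' (Eventually.of_forall (fun n => pr_nonneg (h0 n) (h1 n) _)) _ hTB
  have hrpowT : Tendsto (fun n : ℕ => (n:ℝ)^γ) atTop atTop :=
    (tendsto_rpow_atTop hγpos).comp (tendsto_natCast_atTop_atTop (R := ℝ))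
  have E1 := hrpowT.eventually_ge_atTop 2
  have E3 : ∀ᶠ n : ℕ in atTop, r n < γ/4 :=
    hsmall.eventually_lt_const (by linarith)
  have E4 : ∀ᶠ n : ℕ in atTop, 2 ≤ n := eventually_ge_atTop 2
  filter_upwards [E1, hn2, E3, E4] with n hx2 hc2 hr4 hnge2
  have hn0 : 0 < n := by omega
  have hnpos : (0:ℝ) < n := by exact_mod_cast hn0
  have hn1R : (1:ℝ) ≤ n := by exact_mod_cast hn0
  have hlogpos : 0 < Real.log n := Real.log_pos (by exact_mod_cast hnge2)
  have hDnat : n ≤ n1 n * d1 n + n2 n * d2 n := by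
    have h1' : 1 ≤ d1 n := le_trans (hd2 n) (le_of_lt (hbv n))
    calc n = n1 n + n2 n := (hn n).symm
      _ ≤ n1 n * d1 n + n2 n * d2 n :=
        Nat.add_le_add (Nat.le_mul_of_pos_right _ h1') (Nat.le_mul_of_pos_right _ (hd2 n))
  have hD : (0:ℝ) < ((n1 n * d1 n + n2 n * d2 n : ℕ) : ℝ) := by
    have : 0 < n1 n * d1 n + n2 n * d2 n := by omega
    exact_mod_cast this
  set val : ℝ := ((d1 n * d2 n : ℕ) : ℝ) / ((n1 n * d1 n + n2 n * d2 n : ℕ) : ℝ) with hvaldef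
  set q : ℝ := min 1 val with hqdef
  have hval0 : 0 ≤ val := div_nonneg (Nat.cast_nonneg _) (Nat.cast_nonneg _)
  have hq0 : 0 ≤ q := le_min zero_le_one hval0
  have hq1 : q ≤ 1 := min_le_left _ _
  have hqval : q ≤ val := min_le_right _ _
  have hlogn_pos : 0 < Real.log n / n := div_pos hlogpos hnpos
  have hr0 : 0 ≤ r n := div_nonneg hval0 hlogn_pos.le
  have hr4' : r n ≤ γ/4 := le_of_lt hr4
  have hval_eq : val = r n * (Real.log n / n) := by
    rw [hrdef]
    simp only
    rw [div_mul_cancel₀]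
    exact ne_of_gt hlogn_pos
  have hlogle : Real.log n / n ≤ 1 := by
    rw [div_le_one hnpos]
    linarith [Real.log_le_sub_one_of_pos hnpos]
  have hvalhalf : val ≤ 1/2 := by
    rw [hval_eq]
    nlinarith [mul_le_mul hr4' hlogle hlogn_pos.le (show (0:ℝ) ≤ γ/4 by linarith)]
  have hqhalf : q ≤ 1/2 := hqval.trans hvalhalf
  -- choose m
  set x : ℝ := (n:ℝ)^γ with hxdef
  set m : ℕ := ⌈x⌉₊ with hmdef
  have hx0 : 0 < x := by linarith
  have hm1 : 1 ≤ m := by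
    have := Nat.ceil_pos.2 hx0
    omega
  have hmx : x ≤ (m:ℝ) := Nat.le_ceil x
  have hm2x : (m:ℝ) ≤ 2*x := by
    have := Nat.ceil_lt_add_one hx0.le
    rw [hmdef]
    linarith
  have hxx : x * x = (n:ℝ)^(2*γ) := by
    rw [hxdef, ← Real.rpow_add hnpos]
    ring_nf
  have hm_le_n2 : (m:ℝ) ≤ (n2 n : ℝ) := by
    have h2c : (n:ℝ)^(2*γ) ≤ (n:ℝ)^c := Real.rpow_le_rpow_of_exponent_le hn1R hγc
    calc (m:ℝ) ≤ 2*x := hm2x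
      _ ≤ x*x := by nlinarith
      _ = (n:ℝ)^(2*γ) := hxx
      _ ≤ (n:ℝ)^c := h2c
      _ ≤ n2 n := hc2
  have hmn2 : m ≤ n2 n := by exact_mod_cast hm_le_n2
  have hmn : n1 n + m ≤ n := by have := hn n; omega
  have hp_le : ∀ e : Fin n × Fin n, n1 n ≤ e.1.val ∨ n1 n ≤ e.2.val →
      (min 1 (((bideg (n1 n) (d1 n) (d2 n) e.1 * bideg (n1 n) (d1 n) (d2 n) e.2 : ℕ) : ℝ) /
        ((n1 n * d1 n + n2 n * d2 n : ℕ) : ℝ))) ≤ q := by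
    intro e he
    have hb_le : ∀ v : Fin n, bideg (n1 n) (d1 n) (d2 n) v ≤ d1 n := by
      intro v
      unfold bideg
      split
      · exact le_refl _
      · exact le_of_lt (hbv n)
    have hnum : bideg (n1 n) (d1 n) (d2 n) e.1 * bideg (n1 n) (d1 n) (d2 n) e.2
        ≤ d1 n * d2 n := by
      rcases he with h | h
      · have he1 : bideg (n1 n) (d1 n) (d2 n) e.1 = d2 n := if_neg (not_lt.2 h)
        rw [he1]
        calc d2 n * bideg (n1 n) (d1 n) (d2 n) e.2 ≤ d2 n * d1 n :=
            Nat.mul_le_mul_left _ (hb_le e.2)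
          _ = d1 n * d2 n := Nat.mul_comm _ _
      · have he2 : bideg (n1 n) (d1 n) (d2 n) e.2 = d2 n := if_neg (not_lt.2 h)
        rw [he2]
        exact Nat.mul_le_mul_right _ (hb_le e.1)
    rw [hqdef, hvaldef]
    apply min_le_min (le_refl 1)
    gcongr
  have hkey := key_bound _ (h0 n) (h1 n) (n1 n) m hm1 hmn q hq0 hq1 hp_le
  refine hkey.trans ?_
  show (m:ℝ)^2 * q + (1 - (1-q)^n)^m
      ≤ 4 * r n * (Real.log n * (n:ℝ)^(2*γ-1)) + Real.exp (-(n:ℝ)^(γ/2))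
  have ht1 : (m:ℝ)^2 * q ≤ 4 * r n * (Real.log n * (n:ℝ)^(2*γ-1)) := by
    have h2g : (n:ℝ)^(2*γ-1) = (n:ℝ)^(2*γ) / n := by
      rw [Real.rpow_sub hnpos, Real.rpow_one]
    have hm2 : (m:ℝ)^2 ≤ (2*x)^2 := pow_le_pow_left₀ (Nat.cast_nonneg m) hm2x 2
    calc (m:ℝ)^2 * q ≤ (2*x)^2 * (r n * (Real.log n / n)) := by
          apply mul_le_mul hm2 (hqval.trans hval_eq.le) hq0 (by positivity)
      _ = 4 * r n * (Real.log n * ((x*x) / n)) := by ring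
      _ = 4 * r n * (Real.log n * (n:ℝ)^(2*γ-1)) := by rw [hxx, ← h2g]
  have ht2 : (1 - (1-q)^n)^m ≤ Real.exp (-(n:ℝ)^(γ/2)) := by
    have ha : Real.exp (-(2*q)) ≤ 1 - q := exp_neg_two_mul_le hq0 hqhalf
    have hb : Real.exp ((n:ℝ) * (-(2*q))) ≤ (1-q)^n := by
      rw [Real.exp_nat_mul]
      exact pow_le_pow_left₀ (Real.exp_nonneg _) ha n
    have hqn : q * n ≤ r n * Real.log n := by
      have hveq : val * n = r n * Real.log n := by
        rw [hval_eq]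
        field_simp
      nlinarith [mul_le_mul_of_nonneg_right hqval hnpos.le]
    have hc' : Real.exp (-(2 * (r n * Real.log n))) ≤ Real.exp ((n:ℝ) * (-(2*q))) := by
      apply Real.exp_le_exp.2
      nlinarith
    have hd' : (n:ℝ)^(-(2 * r n)) = Real.exp (-(2 * (r n * Real.log n))) := by
      rw [Real.rpow_def_of_pos hnpos]
      congr 1
      ring
    have hlow : (n:ℝ)^(-(2*r n)) ≤ (1-q)^n := by
      rw [hd']
      exact hc'.trans hb
    have hy0 : 0 ≤ (n:ℝ)^(-(2*r n)) := Real.rpow_nonneg hnpos.le _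
    have hmprod : (n:ℝ)^(γ/2) ≤ (m:ℝ) * (1-q)^n := by
      have hexp : γ/2 ≤ γ + -(2*r n) := by linarith
      calc (n:ℝ)^(γ/2) ≤ (n:ℝ)^(γ + -(2*r n)) :=
            Real.rpow_le_rpow_of_exponent_le hn1R hexp
        _ = x * (n:ℝ)^(-(2*r n)) := by rw [Real.rpow_add hnpos]
        _ ≤ (m:ℝ) * (1-q)^n := mul_le_mul hmx hlow hy0 (Nat.cast_nonneg m)
    have h1q0 : 0 ≤ (1-q)^n := pow_nonneg (by linarith) n
    have h1q1 : (1-q)^n ≤ 1 := pow_le_one₀ (by linarith) (by linarith)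
    calc (1 - (1-q)^n)^m ≤ Real.exp (-((1-q)^n))^m :=
          pow_le_pow_left₀ (by linarith) (one_sub_le_exp_neg _) m
      _ = Real.exp ((m:ℝ) * (-((1-q)^n))) := (Real.exp_nat_mul _ m).symm
      _ ≤ Real.exp (-(n:ℝ)^(γ/2)) := by
          apply Real.exp_le_exp.2
          nlinarith [hmprod]
  linarith [ht1, ht2]

end CLaux

/-- 0-statement for bi-valued Chung–Lu (family `D₁`): if `n1 ≥ n2`, `n2 ≥ n^c` for a
fixed `c > 0`, and `d1·d2/‖d‖₁ = o(log n / n)`, then a.a.s. `G_CL(n,d)` has an isolated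
vertex in `U₂`, and consequently a.a.s. it has no perfect matching. -/
theorem stmt10 (n1 n2 d1 d2 : ℕ → ℕ) (hn : ∀ n, n1 n + n2 n = n)
    (hbv : ∀ n, d2 n < d1 n) (hd2 : ∀ n, 1 ≤ d2 n)
    (hord : ∀ n, n2 n ≤ n1 n)
    (c : ℝ) (hc : 0 < c)
    (hn2 : ∀ᶠ n : ℕ in atTop, ((n : ℝ)) ^ c ≤ (n2 n : ℝ))
    (hsmall : Tendsto (fun n =>
        (((d1 n * d2 n : ℕ) : ℝ) / ((n1 n * d1 n + n2 n * d2 n : ℕ) : ℝ)) /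
          (Real.log n / (n : ℝ))) atTop (nhds 0)) :
    Tendsto (fun n => probGraph n
        (fun e => min 1 (((bideg (n1 n) (d1 n) (d2 n) e.1 *
              bideg (n1 n) (d1 n) (d2 n) e.2 : ℕ) : ℝ) /
            ((n1 n * d1 n + n2 n * d2 n : ℕ) : ℝ)))
        (fun A => ∃ v : Fin n, n1 n ≤ v.val ∧ ∀ e ∈ A, e.1 ≠ v ∧ e.2 ≠ v))
      atTop (nhds 1)
    ∧ Tendsto (fun n => probGraph n
        (fun e => min 1 (((bideg (n1 n) (d1 n) (d2 n) e.1 *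
              bideg (n1 n) (d1 n) (d2 n) e.2 : ℕ) : ℝ) /
            ((n1 n * d1 n + n2 n * d2 n : ℕ) : ℝ)))
        HasPM)
      atTop (nhds 0) := by
  classical
  have hbad := CLaux.badprob_tendsto n1 n2 d1 d2 hn hbv hd2 c hc hn2 hsmall
  have h0 : ∀ n (e : Fin n × Fin n), 0 ≤ min 1 (((bideg (n1 n) (d1 n) (d2 n) e.1 *
      bideg (n1 n) (d1 n) (d2 n) e.2 : ℕ) : ℝ) / ((n1 n * d1 n + n2 n * d2 n : ℕ) : ℝ)) := by
    intro n e
    exact le_min zero_le_one (div_nonneg (Nat.cast_nonneg _) (Nat.cast_nonneg _))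
  have h1 : ∀ n (e : Fin n × Fin n), (min 1 (((bideg (n1 n) (d1 n) (d2 n) e.1 *
      bideg (n1 n) (d1 n) (d2 n) e.2 : ℕ) : ℝ) / ((n1 n * d1 n + n2 n * d2 n : ℕ) : ℝ))) ≤ 1 :=
    fun n e => min_le_left _ _
  have hpg : ∀ (n : ℕ) (p : Fin n × Fin n → ℝ) (Q : Finset (Fin n × Fin n) → Prop),
      probGraph n p Q = CLaux.pr p (pairs n) Q := fun n p Q => rfl
  constructor
  · have hcompl : ∀ n : ℕ, probGraph n
        (fun e => min 1 (((bideg (n1 n) (d1 n) (d2 n) e.1 *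
              bideg (n1 n) (d1 n) (d2 n) e.2 : ℕ) : ℝ) /
            ((n1 n * d1 n + n2 n * d2 n : ℕ) : ℝ)))
        (fun A => ∃ v : Fin n, n1 n ≤ v.val ∧ ∀ e ∈ A, e.1 ≠ v ∧ e.2 ≠ v)
        = 1 - CLaux.pr
        (fun e : Fin n × Fin n => min 1 (((bideg (n1 n) (d1 n) (d2 n) e.1 *
              bideg (n1 n) (d1 n) (d2 n) e.2 : ℕ) : ℝ) /
            ((n1 n * d1 n + n2 n * d2 n : ℕ) : ℝ)))
        (pairs n)
        (fun A => ¬ ∃ v : Fin n, n1 n ≤ v.val ∧ ∀ e ∈ A, e.1 ≠ v ∧ e.2 ≠ v) := by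
      intro n
      have := CLaux.pr_compl
        (p := fun e : Fin n × Fin n => min 1 (((bideg (n1 n) (d1 n) (d2 n) e.1 *
              bideg (n1 n) (d1 n) (d2 n) e.2 : ℕ) : ℝ) /
            ((n1 n * d1 n + n2 n * d2 n : ℕ) : ℝ)))
        (P := pairs n)
        (fun A => ∃ v : Fin n, n1 n ≤ v.val ∧ ∀ e ∈ A, e.1 ≠ v ∧ e.2 ≠ v)
      rw [hpg]
      linarith
    have hone : Tendsto (fun n : ℕ => 1 - CLaux.pr
        (fun e : Fin n × Fin n => min 1 (((bideg (n1 n) (d1 n) (d2 n) e.1 *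
              bideg (n1 n) (d1 n) (d2 n) e.2 : ℕ) : ℝ) /
            ((n1 n * d1 n + n2 n * d2 n : ℕ) : ℝ)))
        (pairs n)
        (fun A => ¬ ∃ v : Fin n, n1 n ≤ v.val ∧ ∀ e ∈ A, e.1 ≠ v ∧ e.2 ≠ v))
        atTop (nhds 1) := by
      have := (tendsto_const_nhds (x := (1:ℝ)) (f := (atTop : Filter ℕ))).sub hbad
      simpa using this
    exact hone.congr (fun n => (hcompl n).symm)
  · apply squeeze_zero (fun n => by rw [hpg]; exact CLaux.pr_nonneg (h0 n) (h1 n) _)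
      (fun n => ?_) hbad
    rw [hpg]
    apply CLaux.pr_mono (h0 n) (h1 n)
    rintro A _ ⟨M, hMA, hMp, hPM⟩ ⟨v, hv, hiso⟩
    obtain ⟨e, ⟨heM, hve⟩, -⟩ := hPM v
    have hne := hiso e (hMA heM)
    rcases hve with h | h
    · exact hne.1 h.symm
    · exact hne.2 h.symm
end

section
/- Let d = d(n) be a sequence of bi-valued degree sequences on [n] (value d_1 with multiplicity n_1 and value d_2 < d_1 with multiplicity n_2 = n − n_1) such that n_1 ≤ n^δ for some fixed constant δ < 1. If d_2²/‖d‖_1 = o(log n / n), then a.a.s. the number of vertices of U_2 having no neighbour in U_2 in the Chung–Lu random graph G_CL(n,d) exceeds n_1; consequently a.a.s. G_CL(n,d) has no perfect matching. -/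
open Finset Filter

/- ========== auxiliary general measure theory on the finite graph space ========== -/

noncomputable def wgt (n : ℕ) (p : Fin n × Fin n → ℝ) (A : Finset (Fin n × Fin n)) : ℝ :=
  (∏ e ∈ A, p e) * ∏ e ∈ pairs n \ A, (1 - p e)

lemma sum_wgt_gen {ι : Type*} [DecidableEq ι] (s : Finset ι) (p : ι → ℝ) :
    ∑ t ∈ s.powerset, (∏ e ∈ t, p e) * ∏ e ∈ s \ t, (1 - p e) = 1 := by
  rw [← Finset.prod_add p (fun e => 1 - p e) s]
  simp

lemma sum_wgt (n : ℕ) (p : Fin n × Fin n → ℝ) :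
    ∑ A ∈ (pairs n).powerset, wgt n p A = 1 := sum_wgt_gen _ _

lemma wgt_nonneg {n : ℕ} {p : Fin n × Fin n → ℝ} (hp0 : ∀ e, 0 ≤ p e)
    (hp1 : ∀ e, p e ≤ 1) (A : Finset (Fin n × Fin n)) : 0 ≤ wgt n p A := by
  apply mul_nonneg
  · exact Finset.prod_nonneg fun e _ => hp0 e
  · exact Finset.prod_nonneg fun e _ => by linarith [hp1 e]

open Classical in
lemma probGraph_eq (n : ℕ) (p : Fin n × Fin n → ℝ) (Q : Finset (Fin n × Fin n) → Prop) :
    probGraph n p Q = ∑ A ∈ (pairs n).powerset, if Q A then wgt n p A else 0 := rfl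

open Classical in
lemma probGraph_nonneg {n : ℕ} {p : Fin n × Fin n → ℝ} (hp0 : ∀ e, 0 ≤ p e)
    (hp1 : ∀ e, p e ≤ 1) (Q : Finset (Fin n × Fin n) → Prop) : 0 ≤ probGraph n p Q := by
  rw [probGraph_eq]
  apply Finset.sum_nonneg
  intro A _
  split
  · exact wgt_nonneg hp0 hp1 A
  · exact le_refl _

open Classical in
lemma probGraph_compl {n : ℕ} (p : Fin n × Fin n → ℝ) (Q : Finset (Fin n × Fin n) → Prop) :
    probGraph n p Q = 1 - probGraph n p (fun A => ¬ Q A) := by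
  have h : probGraph n p Q + probGraph n p (fun A => ¬ Q A) = 1 := by
    rw [probGraph_eq, probGraph_eq, ← Finset.sum_add_distrib, ← sum_wgt n p]
    apply Finset.sum_congr rfl
    intro A _
    by_cases h : Q A <;> simp [h]
  linarith

open Classical in
lemma probGraph_mono {n : ℕ} {p : Fin n × Fin n → ℝ} (hp0 : ∀ e, 0 ≤ p e)
    (hp1 : ∀ e, p e ≤ 1) {Q R : Finset (Fin n × Fin n) → Prop}
    (h : ∀ A ∈ (pairs n).powerset, Q A → R A) :
    probGraph n p Q ≤ probGraph n p R := by
  rw [probGraph_eq, probGraph_eq]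
  apply Finset.sum_le_sum
  intro A hA
  by_cases hq : Q A
  · simp [hq, h A hA hq]
  · simp only [hq, if_false]
    split
    · exact wgt_nonneg hp0 hp1 A
    · exact le_refl _

open Classical in
lemma probGraph_markov {n : ℕ} {p : Fin n × Fin n → ℝ} (hp0 : ∀ e, 0 ≤ p e)
    (hp1 : ∀ e, p e ≤ 1) (f : Finset (Fin n × Fin n) → ℝ) (hf : ∀ A, 0 ≤ f A)
    {t : ℝ} (ht : 0 < t) :
    probGraph n p (fun A => t ≤ f A) ≤ (∑ A ∈ (pairs n).powerset, wgt n p A * f A) / t := by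
  rw [probGraph_eq, le_div_iff₀ ht, Finset.sum_mul]
  apply Finset.sum_le_sum
  intro A _
  split
  · rename_i h
    calc wgt n p A * t ≤ wgt n p A * f A :=
          mul_le_mul_of_nonneg_left h (wgt_nonneg hp0 hp1 A)
      _ = _ := rfl
  · simpa using mul_nonneg (wgt_nonneg hp0 hp1 A) (hf A)

open Classical in
lemma probGraph_void {n : ℕ} (p : Fin n × Fin n → ℝ) {T : Finset (Fin n × Fin n)}
    (hT : T ⊆ pairs n) :
    ∑ A ∈ (pairs n).powerset, (if A ∩ T = ∅ then wgt n p A else 0)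
      = ∏ e ∈ T, (1 - p e) := by
  classical
  rw [← Finset.sum_filter]
  have hset : (pairs n).powerset.filter (fun A => A ∩ T = ∅) = (pairs n \ T).powerset := by
    ext A
    simp only [Finset.mem_filter, Finset.mem_powerset, Finset.subset_sdiff,
      ← Finset.disjoint_iff_inter_eq_empty]
  rw [hset]
  have key : ∀ A ∈ (pairs n \ T).powerset,
      wgt n p A = (∏ e ∈ T, (1 - p e)) *
        ((∏ e ∈ A, p e) * ∏ e ∈ (pairs n \ T) \ A, (1 - p e)) := by
    intro A hA
    rw [Finset.mem_powerset] at hA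
    have hdisj : Disjoint T ((pairs n \ T) \ A) := by
      exact Finset.disjoint_sdiff.mono_right (Finset.sdiff_subset)
    have hsplit : pairs n \ A = T ∪ ((pairs n \ T) \ A) := by
      ext e
      simp only [Finset.mem_sdiff, Finset.mem_union]
      constructor
      · rintro ⟨he, hne⟩
        by_cases h : e ∈ T
        · exact Or.inl h
        · exact Or.inr ⟨⟨he, h⟩, hne⟩
      · rintro (h | ⟨⟨he, _⟩, hne⟩)
        · refine ⟨hT h, fun hc => ?_⟩
          have := hA hc
          simp only [Finset.mem_sdiff] at this
          exact this.2 h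
        · exact ⟨he, hne⟩
    unfold wgt
    rw [hsplit, Finset.prod_union hdisj]
    ring
  rw [Finset.sum_congr rfl key, ← Finset.mul_sum, sum_wgt_gen, mul_one]

/- ========== combinatorics of the star edge-sets within U₂ ========== -/

def Tv (n n1 : ℕ) (v : Fin n) : Finset (Fin n × Fin n) :=
  (pairs n).filter fun e => (e.1 = v ∧ n1 ≤ e.2.val) ∨ (e.2 = v ∧ n1 ≤ e.1.val)

lemma Tv_subset (n n1 : ℕ) (v : Fin n) : Tv n n1 v ⊆ pairs n := Finset.filter_subset _ _

lemma card_filter_le_val (n n1 : ℕ) :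
    (Finset.univ.filter fun u : Fin n => n1 ≤ u.val).card = n - n1 := by
  rw [← Nat.card_Ico]
  apply Finset.card_bij (fun u _ => u.val)
  · intro u hu
    simp only [Finset.mem_filter] at hu
    simp [Finset.mem_Ico, hu.2, u.isLt]
  · intro u _ u' _ h
    exact Fin.val_injective h
  · intro m hm
    simp only [Finset.mem_Ico] at hm
    exact ⟨⟨m, hm.2⟩, by simp [hm.1], rfl⟩

lemma Tv_eq_image (n n1 : ℕ) (v : Fin n) :
    Tv n n1 v = (Finset.univ.filter fun u : Fin n => (n1 ≤ u.val ∧ u ≠ v)).image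
      (fun u => if u < v then (u, v) else (v, u)) := by
  ext e
  simp only [Tv, Finset.mem_filter, Finset.mem_image, pairs, Finset.mem_univ, true_and]
  constructor
  · rintro ⟨hlt, (⟨h1, h2⟩ | ⟨h1, h2⟩)⟩
    · refine ⟨e.2, ⟨h2, ?_⟩, ?_⟩
      · rintro rfl; rw [h1] at hlt; exact lt_irrefl _ hlt
      · rw [if_neg (by rw [← h1]; exact fun h => lt_asymm hlt h)]
        rw [← h1]
    · refine ⟨e.1, ⟨h2, ?_⟩, ?_⟩
      · rintro rfl; rw [h1] at hlt; exact lt_irrefl _ hlt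
      · rw [if_pos (by rw [← h1]; exact hlt), ← h1]
  · rintro ⟨u, ⟨hu1, hu2⟩, rfl⟩
    by_cases h : u < v
    · rw [if_pos h]
      exact ⟨h, Or.inr ⟨rfl, hu1⟩⟩
    · rw [if_neg h]
      have : v < u := lt_of_le_of_ne (not_lt.mp h) (Ne.symm hu2)
      exact ⟨this, Or.inl ⟨rfl, hu1⟩⟩

lemma card_Tv (n n1 : ℕ) (v : Fin n) (hv : n1 ≤ v.val) :
    (Tv n n1 v).card = n - n1 - 1 := by
  rw [Tv_eq_image, Finset.card_image_of_injOn]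
  · have : (Finset.univ.filter fun u : Fin n => (n1 ≤ u.val ∧ u ≠ v))
        = (Finset.univ.filter fun u : Fin n => n1 ≤ u.val).erase v := by
      ext u
      simp only [Finset.mem_filter, Finset.mem_erase, Finset.mem_univ, true_and]
      tauto
    rw [this, Finset.card_erase_of_mem (by simp [hv]), card_filter_le_val]
  · intro u hu u' hu' h
    simp only [Finset.coe_filter, Set.mem_setOf_eq] at hu hu'
    simp only at h
    by_cases h1 : u < v <;> by_cases h2 : u' < v
    · rw [if_pos h1, if_pos h2] at h
      injection h with ha hb
    · rw [if_pos h1, if_neg h2] at h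
      injection h with ha hb
      exact absurd ha hu.2.2
    · rw [if_neg h1, if_pos h2] at h
      injection h with ha hb
      exact absurd hb hu.2.2
    · rw [if_neg h1, if_neg h2] at h
      injection h with ha hb

lemma Tv_inter {n n1 : ℕ} {u v : Fin n} (hu : n1 ≤ u.val) (hv : n1 ≤ v.val)
    (huv : u < v) : Tv n n1 u ∩ Tv n n1 v = {(u, v)} := by
  ext e
  simp only [Finset.mem_inter, Tv, Finset.mem_filter, pairs, Finset.mem_univ, true_and,
    Finset.mem_singleton]
  constructor
  · rintro ⟨⟨hlt, (⟨h1, _⟩ | ⟨h1, _⟩)⟩, ⟨_, (⟨h2, _⟩ | ⟨h2, _⟩)⟩⟩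
    · exact absurd (h1.symm.trans h2) (ne_of_lt huv)
    · exact Prod.ext h1 h2
    · rw [h2, h1] at hlt; exact absurd hlt (lt_asymm huv)
    · exact absurd (h1.symm.trans h2) (ne_of_lt huv)
  · rintro rfl
    exact ⟨⟨huv, Or.inl ⟨rfl, hv⟩⟩, ⟨huv, Or.inr ⟨rfl, hu⟩⟩⟩

lemma card_Tv_union {n n1 : ℕ} {u v : Fin n} (hu : n1 ≤ u.val) (hv : n1 ≤ v.val)
    (huv : u ≠ v) :
    (Tv n n1 u ∪ Tv n n1 v).card + 1 = (n - n1 - 1) + (n - n1 - 1) := by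
  have h := Finset.card_union_add_card_inter (Tv n n1 u) (Tv n n1 v)
  rcases lt_or_gt_of_ne huv with hlt | hlt
  · rw [Tv_inter hu hv hlt, Finset.card_singleton, card_Tv n n1 u hu,
      card_Tv n n1 v hv] at h
    exact h
  · rw [Finset.inter_comm, Tv_inter hv hu hlt, Finset.card_singleton,
      card_Tv n n1 u hu, card_Tv n n1 v hv] at h
    exact h

lemma mem_Tv_val {n n1 : ℕ} {v : Fin n} (hv : n1 ≤ v.val) {e : Fin n × Fin n}
    (he : e ∈ Tv n n1 v) : n1 ≤ e.1.val ∧ n1 ≤ e.2.val := by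
  simp only [Tv, Finset.mem_filter] at he
  rcases he.2 with ⟨h1, h2⟩ | ⟨h1, h2⟩
  · exact ⟨by rw [h1]; exact hv, h2⟩
  · exact ⟨h2, by rw [h1]; exact hv⟩

noncomputable def pCL (n1 d1 d2 D : ℕ) {n : ℕ} (e : Fin n × Fin n) : ℝ :=
  min 1 (((bideg n1 d1 d2 e.1 * bideg n1 d1 d2 e.2 : ℕ) : ℝ) / ((D : ℕ) : ℝ))

noncomputable def qCL (d2 D : ℕ) : ℝ := min 1 (((d2 * d2 : ℕ) : ℝ) / ((D : ℕ) : ℝ))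

lemma pCL_nonneg (n1 d1 d2 D : ℕ) {n : ℕ} (e : Fin n × Fin n) : 0 ≤ pCL n1 d1 d2 D e :=
  le_min zero_le_one (div_nonneg (Nat.cast_nonneg _) (Nat.cast_nonneg _))

lemma pCL_le_one (n1 d1 d2 D : ℕ) {n : ℕ} (e : Fin n × Fin n) : pCL n1 d1 d2 D e ≤ 1 :=
  min_le_left _ _

lemma qCL_nonneg (d2 D : ℕ) : 0 ≤ qCL d2 D :=
  le_min zero_le_one (div_nonneg (Nat.cast_nonneg _) (Nat.cast_nonneg _))

lemma pCL_eq_q {n n1 d1 d2 D : ℕ} {e : Fin n × Fin n}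
    (h1 : n1 ≤ e.1.val) (h2 : n1 ≤ e.2.val) : pCL n1 d1 d2 D e = qCL d2 D := by
  unfold pCL qCL bideg
  rw [if_neg (by omega), if_neg (by omega)]

lemma prod_one_sub_Tv {n n1 d1 d2 D : ℕ} {T : Finset (Fin n × Fin n)}
    (h : ∀ e ∈ T, n1 ≤ e.1.val ∧ n1 ≤ e.2.val) :
    ∏ e ∈ T, (1 - pCL n1 d1 d2 D e) = (1 - qCL d2 D) ^ T.card := by
  rw [← Finset.prod_const]
  apply Finset.prod_congr rfl
  intro e he
  rw [pCL_eq_q (h e he).1 (h e he).2]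

def U2 (n n1 : ℕ) : Finset (Fin n) := Finset.univ.filter fun v => n1 ≤ v.val

lemma card_U2 (n n1 : ℕ) : (U2 n n1).card = n - n1 := card_filter_le_val n n1

open Classical in
noncomputable def Xr (n n1 : ℕ) (A : Finset (Fin n × Fin n)) : ℝ :=
  (((U2 n n1).filter fun v => A ∩ Tv n n1 v = ∅).card : ℝ)

open Classical in
lemma Xr_eq_sum (n n1 : ℕ) (A : Finset (Fin n × Fin n)) :
    Xr n n1 A = ∑ v ∈ U2 n n1, (if A ∩ Tv n n1 v = ∅ then (1:ℝ) else 0) := by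
  unfold Xr
  rw [Finset.card_filter, Nat.cast_sum]
  exact Finset.sum_congr rfl (by intros; split <;> simp)

open Classical in
lemma EX_eq (n n1 : ℕ) (p : Fin n × Fin n → ℝ) :
    ∑ A ∈ (pairs n).powerset, wgt n p A * Xr n n1 A
      = ∑ v ∈ U2 n n1, ∏ e ∈ Tv n n1 v, (1 - p e) := by
  have step : ∀ A, wgt n p A * Xr n n1 A
      = ∑ v ∈ U2 n n1, (if A ∩ Tv n n1 v = ∅ then wgt n p A else 0) := by
    intro A
    rw [Xr_eq_sum, Finset.mul_sum]
    exact Finset.sum_congr rfl (by intros; split <;> simp)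
  rw [Finset.sum_congr rfl fun A _ => step A, Finset.sum_comm]
  exact Finset.sum_congr rfl fun v _ => probGraph_void p (Tv_subset n n1 v)

open Classical in
lemma EX2_eq (n n1 : ℕ) (p : Fin n × Fin n → ℝ) :
    ∑ A ∈ (pairs n).powerset, wgt n p A * (Xr n n1 A) ^ 2
      = ∑ u ∈ U2 n n1, ∑ v ∈ U2 n n1, ∏ e ∈ Tv n n1 u ∪ Tv n n1 v, (1 - p e) := by
  have step : ∀ A, wgt n p A * (Xr n n1 A) ^ 2
      = ∑ u ∈ U2 n n1, ∑ v ∈ U2 n n1,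
          (if A ∩ (Tv n n1 u ∪ Tv n n1 v) = ∅ then wgt n p A else 0) := by
    intro A
    rw [sq, Xr_eq_sum, Finset.sum_mul_sum, Finset.mul_sum]
    apply Finset.sum_congr rfl
    intro u _
    rw [Finset.mul_sum]
    apply Finset.sum_congr rfl
    intro v _
    have : A ∩ (Tv n n1 u ∪ Tv n n1 v) = ∅ ↔ A ∩ Tv n n1 u = ∅ ∧ A ∩ Tv n n1 v = ∅ := by
      rw [Finset.inter_union_distrib_left, Finset.union_eq_empty]
    by_cases h1 : A ∩ Tv n n1 u = ∅ <;> by_cases h2 : A ∩ Tv n n1 v = ∅ <;>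
      simp [h1, h2, this]
  rw [Finset.sum_congr rfl fun A _ => step A, Finset.sum_comm]
  apply Finset.sum_congr rfl
  intro u _
  rw [Finset.sum_comm]
  exact Finset.sum_congr rfl fun v _ =>
    probGraph_void p (Finset.union_subset (Tv_subset n n1 u) (Tv_subset n n1 v))

open Classical in
lemma inter_Tv_empty_iff {n n1 : ℕ} {A : Finset (Fin n × Fin n)} (hA : A ⊆ pairs n)
    (v : Fin n) :
    A ∩ Tv n n1 v = ∅ ↔
      ∀ e ∈ A, ¬(e.1 = v ∧ n1 ≤ e.2.val) ∧ ¬(e.2 = v ∧ n1 ≤ e.1.val) := by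
  rw [← Finset.disjoint_iff_inter_eq_empty, Finset.disjoint_left]
  constructor
  · intro h e he
    have hnot := h he
    simp only [Tv, Finset.mem_filter, not_and, not_or] at hnot
    have := hnot (hA he)
    tauto
  · intro h e heA heT
    simp only [Tv, Finset.mem_filter] at heT
    rcases heT.2 with h1 | h1
    · exact (h e heA).1 h1
    · exact (h e heA).2 h1

set_option maxHeartbeats 2000000 in
open Classical in
lemma main_bound (n n1 d1 d2 D k : ℕ) (hk : n - n1 = k + 2)
    (hq : qCL d2 D ≤ 1/2)
    (hn1 : (n1 : ℝ) ≤ ((n - n1 : ℕ) : ℝ) * (1 - qCL d2 D) ^ (k+1) / 2) :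
    probGraph n (pCL n1 d1 d2 D)
      (fun A => ¬ (n1 < (Finset.univ.filter fun v : Fin n => n1 ≤ v.val ∧
        ∀ e ∈ A, ¬(e.1 = v ∧ n1 ≤ e.2.val) ∧ ¬(e.2 = v ∧ n1 ≤ e.1.val)).card))
      ≤ 4 / (((n - n1 : ℕ) : ℝ) * (1 - qCL d2 D) ^ (k+1)) + 8 * qCL d2 D := by
  set q := qCL d2 D with hqdef
  have hq0 : 0 ≤ q := qCL_nonneg d2 D
  set Q1 : ℝ := 1 - q with hQ1def
  have hQ1 : (1:ℝ)/2 ≤ Q1 := by simp only [hQ1def]; linarith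
  have hQ1pos : 0 < Q1 := by linarith
  set N : ℝ := ((n - n1 : ℕ) : ℝ) with hNdef
  have hN : N = (k : ℝ) + 2 := by rw [hNdef, hk]; push_cast; ring
  have hNpos : 0 < N := by rw [hN]; positivity
  set P : ℝ := Q1 ^ (k+1) with hPdef
  have hPpos : 0 < P := pow_pos hQ1pos _
  set μ : ℝ := N * P with hμdef
  have hμpos : 0 < μ := mul_pos hNpos hPpos
  have hn1μ : (n1 : ℝ) < μ := lt_of_le_of_lt hn1 (by linarith)
  -- Step 1: monotone into the Chebyshev event
  have step1 : probGraph n (pCL n1 d1 d2 D)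
      (fun A => ¬ (n1 < (Finset.univ.filter fun v : Fin n => n1 ≤ v.val ∧
        ∀ e ∈ A, ¬(e.1 = v ∧ n1 ≤ e.2.val) ∧ ¬(e.2 = v ∧ n1 ≤ e.1.val)).card))
      ≤ probGraph n (pCL n1 d1 d2 D)
        (fun A => (μ - (n1:ℝ))^2 ≤ (Xr n n1 A - μ)^2) := by
    apply probGraph_mono (pCL_nonneg n1 d1 d2 D) (pCL_le_one n1 d1 d2 D)
    intro A hA hQA
    rw [Finset.mem_powerset] at hA
    have hXeq : (Finset.univ.filter fun v : Fin n => n1 ≤ v.val ∧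
        ∀ e ∈ A, ¬(e.1 = v ∧ n1 ≤ e.2.val) ∧ ¬(e.2 = v ∧ n1 ≤ e.1.val)).card
        = ((U2 n n1).filter fun v => A ∩ Tv n n1 v = ∅).card := by
      congr 1
      rw [U2, Finset.filter_filter]
      apply Finset.filter_congr
      intro v _
      constructor
      · rintro ⟨h1, h2⟩
        exact ⟨h1, (inter_Tv_empty_iff hA v).2 h2⟩
      · rintro ⟨h1, h2⟩
        exact ⟨h1, (inter_Tv_empty_iff hA v).1 h2⟩
    rw [hXeq] at hQA
    push_neg at hQA
    have hXle : Xr n n1 A ≤ (n1 : ℝ) := by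
      unfold Xr; exact_mod_cast hQA
    have h1 : μ - (n1:ℝ) ≤ μ - Xr n n1 A := by linarith
    have h2 : (0:ℝ) ≤ μ - (n1:ℝ) := by linarith
    calc (μ - (n1:ℝ))^2 ≤ (μ - Xr n n1 A)^2 := by nlinarith
      _ = (Xr n n1 A - μ)^2 := by ring
  -- Step 2: Markov
  have step2 : probGraph n (pCL n1 d1 d2 D)
      (fun A => (μ - (n1:ℝ))^2 ≤ (Xr n n1 A - μ)^2)
      ≤ (∑ A ∈ (pairs n).powerset, wgt n (pCL n1 d1 d2 D) A * (Xr n n1 A - μ)^2)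
        / (μ - (n1:ℝ))^2 := by
    apply probGraph_markov (pCL_nonneg n1 d1 d2 D) (pCL_le_one n1 d1 d2 D)
    · intro A; positivity
    · have : (0:ℝ) < μ - n1 := by linarith
      positivity
  -- Step 3: compute the variance sum
  have hEX : ∑ A ∈ (pairs n).powerset, wgt n (pCL n1 d1 d2 D) A * Xr n n1 A = μ := by
    rw [EX_eq]
    have : ∀ v ∈ U2 n n1, ∏ e ∈ Tv n n1 v, (1 - pCL n1 d1 d2 D e) = P := by
      intro v hv
      have hv' : n1 ≤ v.val := by simpa [U2] using hv
      rw [prod_one_sub_Tv (fun e he => mem_Tv_val hv' he), card_Tv n n1 v hv', hPdef]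
      congr 1
      omega
    rw [Finset.sum_congr rfl this, Finset.sum_const, card_U2, nsmul_eq_mul, hμdef, hNdef]
  have hEX2 : ∑ A ∈ (pairs n).powerset, wgt n (pCL n1 d1 d2 D) A * (Xr n n1 A)^2
      = N * P + N * ((k:ℝ)+1) * Q1^(2*k+1) := by
    rw [EX2_eq]
    have inner : ∀ u ∈ U2 n n1,
        ∑ v ∈ U2 n n1, ∏ e ∈ Tv n n1 u ∪ Tv n n1 v, (1 - pCL n1 d1 d2 D e)
          = P + ((k:ℝ)+1) * Q1^(2*k+1) := by
      intro u hu
      have hu' : n1 ≤ u.val := by simpa [U2] using hu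
      rw [← Finset.add_sum_erase _ _ hu]
      congr 1
      · rw [Finset.union_self, prod_one_sub_Tv (fun e he => mem_Tv_val hu' he),
          card_Tv n n1 u hu', hPdef]
        congr 1
        omega
      · have : ∀ v ∈ (U2 n n1).erase u,
            ∏ e ∈ Tv n n1 u ∪ Tv n n1 v, (1 - pCL n1 d1 d2 D e) = Q1^(2*k+1) := by
          intro v hv
          rw [Finset.mem_erase] at hv
          have hv' : n1 ≤ v.val := by simpa [U2] using hv.2
          have hcard : (Tv n n1 u ∪ Tv n n1 v).card = 2*k+1 := by
            have := card_Tv_union hu' hv' (Ne.symm hv.1)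
            omega
          rw [prod_one_sub_Tv, hcard]
          intro e he
          rcases Finset.mem_union.1 he with h | h
          · exact mem_Tv_val hu' h
          · exact mem_Tv_val hv' h
        rw [Finset.sum_congr rfl this, Finset.sum_const, nsmul_eq_mul,
          Finset.card_erase_of_mem hu, card_U2]
        congr 1
        rw [hk]
        push_cast
        ring
    rw [Finset.sum_congr rfl inner, Finset.sum_const, card_U2, nsmul_eq_mul, ← hNdef]
    ring
  have hVar : ∑ A ∈ (pairs n).powerset, wgt n (pCL n1 d1 d2 D) A * (Xr n n1 A - μ)^2
      = N * P + N * ((k:ℝ)+1) * Q1^(2*k+1) - μ^2 := by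
    have expand : ∀ A ∈ (pairs n).powerset,
        wgt n (pCL n1 d1 d2 D) A * (Xr n n1 A - μ)^2
        = wgt n (pCL n1 d1 d2 D) A * (Xr n n1 A)^2
          - 2*μ*(wgt n (pCL n1 d1 d2 D) A * Xr n n1 A)
          + μ^2 * wgt n (pCL n1 d1 d2 D) A := by
      intro A _; ring
    rw [Finset.sum_congr rfl expand]
    rw [Finset.sum_add_distrib, Finset.sum_sub_distrib, ← Finset.mul_sum, ← Finset.mul_sum,
      hEX, hEX2, sum_wgt]
    ring
  -- Step 4: algebraic bound
  set R : ℝ := Q1^(2*k+1) with hRdef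
  have hRpos : 0 < R := pow_pos hQ1pos _
  have hPR : P * P = R * Q1 := by
    rw [hPdef, hRdef, ← pow_add, ← pow_succ]
    congr 1
    omega
  have hVarBound : N * P + N * ((k:ℝ)+1) * R - μ^2 ≤ μ + N^2 * q * R := by
    have h1 : N * ((k:ℝ)+1) * R - μ^2 ≤ N^2 * q * R := by
      have hμ2 : μ^2 = N^2 * (R * Q1) := by
        have hp2 : P^2 = R * Q1 := by rw [sq, hPR]
        rw [hμdef, mul_pow, hp2]
      rw [hμ2]
      have hthis : N * ((k:ℝ)+1) * R - N^2 * (R * Q1) = N^2*q*R - N*R := by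
        rw [hN, hQ1def]; ring
      rw [hthis]
      nlinarith [mul_pos hNpos hRpos]
    linarith [hμdef, h1]
  have hdenom : μ^2/4 ≤ (μ - (n1:ℝ))^2 := by nlinarith
  have step4 : (∑ A ∈ (pairs n).powerset, wgt n (pCL n1 d1 d2 D) A * (Xr n n1 A - μ)^2)
      / (μ - (n1:ℝ))^2 ≤ (μ + N^2 * q * R) / (μ^2/4) := by
    rw [hVar]
    apply div_le_div₀ (by positivity) (by linarith [hVarBound]) (by positivity) hdenom
  have step5 : (μ + N^2 * q * R) / (μ^2/4) ≤ 4/μ + 8*q := by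
    rw [div_le_iff₀ (by positivity)]
    have hfe : (4/μ) * (μ^2/4) = μ := by field_simp
    have hR2P : R ≤ 2*(P*P) := by
      rw [hPR]
      nlinarith
    have hq2 : N^2 * q * R ≤ 2 * q * N^2 * (P*P) := by
      nlinarith [mul_nonneg (mul_nonneg (sq_nonneg N) hq0) hRpos.le]
    calc μ + N^2*q*R ≤ μ + 2*q*N^2*(P*P) := by linarith
      _ = (4/μ)*(μ^2/4) + 8*q*(μ^2/4) := by rw [hfe, hμdef]; ring
      _ = (4/μ + 8*q) * (μ^2/4) := by ring
  calc probGraph n (pCL n1 d1 d2 D) _ ≤ _ := step1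
    _ ≤ _ := step2
    _ ≤ (μ + N^2 * q * R) / (μ^2/4) := step4
    _ ≤ 4/μ + 8*q := step5
    _ = 4 / (((n - n1 : ℕ) : ℝ) * (1 - qCL d2 D) ^ (k+1)) + 8 * qCL d2 D := by
      rw [hμdef, hNdef, hPdef, hQ1def, hqdef]

open Classical in
lemma hasPM_card_le {n n1 : ℕ} {A : Finset (Fin n × Fin n)} (hA : A ⊆ pairs n)
    (h : HasPM A) :
    (Finset.univ.filter fun v : Fin n => n1 ≤ v.val ∧
        ∀ e ∈ A, ¬(e.1 = v ∧ n1 ≤ e.2.val) ∧ ¬(e.2 = v ∧ n1 ≤ e.1.val)).card ≤ n1 := by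
  obtain ⟨M, hMA, hMsub, hMuniq⟩ := h
  set W := Finset.univ.filter fun v : Fin n => n1 ≤ v.val ∧
      ∀ e ∈ A, ¬(e.1 = v ∧ n1 ≤ e.2.val) ∧ ¬(e.2 = v ∧ n1 ≤ e.1.val) with hW
  let E : Fin n → Fin n × Fin n := fun v => (hMuniq v).exists.choose
  have hE : ∀ v, E v ∈ M ∧ (v = (E v).1 ∨ v = (E v).2) :=
    fun v => (hMuniq v).exists.choose_spec
  have hlt : ∀ v, (E v).1 < (E v).2 := fun v => by
    have := hMsub (hE v).1
    simpa [pairs] using this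
  let f : Fin n → Fin n := fun v => if v = (E v).1 then (E v).2 else (E v).1
  have hvf : ∀ v, (v = (E v).1 ∧ f v = (E v).2) ∨ (v = (E v).2 ∧ f v = (E v).1) := by
    intro v
    by_cases hc : v = (E v).1
    · exact Or.inl ⟨hc, if_pos hc⟩
    · exact Or.inr ⟨(hE v).2.resolve_left hc, if_neg hc⟩
  have hmaps : ∀ v ∈ W, f v ∈ Finset.univ.filter fun w : Fin n => w.val < n1 := by
    intro v hv
    rw [hW, Finset.mem_filter] at hv
    obtain ⟨-, hv1, hv2⟩ := hv
    have hcond := hv2 (E v) (hMA (hE v).1)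
    rcases hvf v with ⟨h1, h2⟩ | ⟨h1, h2⟩
    · have := hcond.1
      rw [Finset.mem_filter]
      refine ⟨Finset.mem_univ _, ?_⟩
      rw [h2]
      by_contra hcon
      exact this ⟨h1.symm, not_lt.mp hcon⟩
    · have := hcond.2
      rw [Finset.mem_filter]
      refine ⟨Finset.mem_univ _, ?_⟩
      rw [h2]
      by_contra hcon
      exact this ⟨h1.symm, not_lt.mp hcon⟩
  have hinj : Set.InjOn f W := by
    intro v hv v' hv' hff
    have hP1 : E v ∈ M ∧ (f v = (E v).1 ∨ f v = (E v).2) := by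
      rcases hvf v with ⟨_, h2⟩ | ⟨_, h2⟩
      · exact ⟨(hE v).1, Or.inr h2⟩
      · exact ⟨(hE v).1, Or.inl h2⟩
    have hP2 : E v' ∈ M ∧ (f v = (E v').1 ∨ f v = (E v').2) := by
      rcases hvf v' with ⟨_, h2⟩ | ⟨_, h2⟩
      · exact ⟨(hE v').1, Or.inr (hff.trans h2)⟩
      · exact ⟨(hE v').1, Or.inl (hff.trans h2)⟩
    have hEeq : E v = E v' := (hMuniq (f v)).unique hP1 hP2
    rcases hvf v with ⟨h1, h2⟩ | ⟨h1, h2⟩ <;> rcases hvf v' with ⟨h1', h2'⟩ | ⟨h1', h2'⟩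
    · rw [h1, hEeq, ← h1']
    · exfalso
      have : (E v').2 = (E v').1 := by rw [← hEeq, ← h2, hff, h2', hEeq]
      exact absurd this.symm (ne_of_lt (hlt v'))
    · exfalso
      have : (E v').1 = (E v').2 := by rw [← hEeq, ← h2, hff, h2', hEeq]
      exact absurd this (ne_of_lt (hlt v'))
    · rw [h1, hEeq, ← h1']
  have hcard := Finset.card_le_card_of_injOn f hmaps hinj
  have hsplit := Finset.card_filter_add_card_filter_not
    (s := (Finset.univ : Finset (Fin n))) (p := fun w : Fin n => n1 ≤ w.val)
  have hfc : (Finset.univ.filter fun w : Fin n => ¬ n1 ≤ w.val)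
      = Finset.univ.filter fun w : Fin n => w.val < n1 := by
    apply Finset.filter_congr
    intro w _
    simp [not_le]
  rw [hfc, card_filter_le_val, Finset.card_univ, Fintype.card_fin] at hsplit
  omega

lemma exp_neg_two_le {q : ℝ} (h0 : 0 ≤ q) (h2 : q ≤ 1/2) : Real.exp (-(2*q)) ≤ 1 - q := by
  have h1 : 1 + 2*q ≤ Real.exp (2*q) := by linarith [Real.add_one_le_exp (2*q)]
  have hpos : (0:ℝ) < 1 + 2*q := by linarith
  rw [Real.exp_neg, inv_eq_one_div]
  have h3 : 1/Real.exp (2*q) ≤ 1/(1+2*q) := one_div_le_one_div_of_le hpos h1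
  have h4 : 1/(1+2*q) ≤ 1 - q := by
    rw [div_le_iff₀ hpos]
    nlinarith
  linarith

set_option maxHeartbeats 4000000 in
open Classical in
/-- 0-statement for bi-valued Chung–Lu (family `D₂`): if `n1 ≤ n^δ` for a fixed
`δ < 1` and `d2²/‖d‖₁ = o(log n / n)`, then a.a.s. the number of vertices of `U₂`
with no neighbour in `U₂` exceeds `n1`, and consequently a.a.s. `G_CL(n,d)` has no
perfect matching. -/
theorem stmt11 (n1 n2 d1 d2 : ℕ → ℕ) (hn : ∀ n, n1 n + n2 n = n)
    (hbv : ∀ n, d2 n < d1 n) (hd2 : ∀ n, 1 ≤ d2 n)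
    (δ : ℝ) (hδ : δ < 1)
    (hn1 : ∀ᶠ n : ℕ in atTop, (n1 n : ℝ) ≤ ((n : ℝ)) ^ δ)
    (hsmall : Tendsto (fun n =>
        (((d2 n * d2 n : ℕ) : ℝ) / ((n1 n * d1 n + n2 n * d2 n : ℕ) : ℝ)) /
          (Real.log n / (n : ℝ))) atTop (nhds 0)) :
    Tendsto (fun n => probGraph n
        (fun e => min 1 (((bideg (n1 n) (d1 n) (d2 n) e.1 *
              bideg (n1 n) (d1 n) (d2 n) e.2 : ℕ) : ℝ) /
            ((n1 n * d1 n + n2 n * d2 n : ℕ) : ℝ)))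
        (fun A => n1 n <
          (Finset.univ.filter fun v : Fin n => n1 n ≤ v.val ∧
            ∀ e ∈ A, ¬(e.1 = v ∧ n1 n ≤ e.2.val) ∧ ¬(e.2 = v ∧ n1 n ≤ e.1.val)).card))
      atTop (nhds 1)
    ∧ Tendsto (fun n => probGraph n
        (fun e => min 1 (((bideg (n1 n) (d1 n) (d2 n) e.1 *
              bideg (n1 n) (d1 n) (d2 n) e.2 : ℕ) : ℝ) /
            ((n1 n * d1 n + n2 n * d2 n : ℕ) : ℝ)))
        HasPM)
      atTop (nhds 0) := by
  classical
  -- abbreviations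
  set D : ℕ → ℕ := fun n => n1 n * d1 n + n2 n * d2 n with hD
  set q : ℕ → ℝ := fun n => qCL (d2 n) (D n) with hqdef
  set s : ℕ → ℝ := fun n => ((d2 n * d2 n : ℕ) : ℝ) / ((D n : ℕ) : ℝ) with hsdef
  have hq0 : ∀ n, 0 ≤ q n := fun n => qCL_nonneg _ _
  have hs0 : ∀ n, 0 ≤ s n := fun n => div_nonneg (Nat.cast_nonneg _) (Nat.cast_nonneg _)
  have hqs : ∀ n, q n ≤ s n := fun n => min_le_right _ _
  set δ' : ℝ := max δ 0 with hδ'def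
  have hδ'0 : 0 ≤ δ' := le_max_right _ _
  have hδ'1 : δ' < 1 := max_lt hδ one_pos
  set ε : ℝ := (1 - δ')/4 with hεdef
  have hε : 0 < ε := by rw [hεdef]; linarith
  set θ : ℝ := (1 + δ')/2 with hθdef
  have hθpos : 0 < θ := by rw [hθdef]; linarith
  have hθε : θ = 1 - 2*ε := by rw [hθdef, hεdef]; ring
  have hδ'θ : δ' < θ := by rw [hθdef]; linarith
  -- basic limits
  have hlogn : Tendsto (fun n : ℕ => Real.log n / n) atTop (nhds 0) :=
    (Real.isLittleO_log_id_atTop.tendsto_div_nhds_zero).comp tendsto_natCast_atTop_atTop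
  have hs_to : Tendsto s atTop (nhds 0) := by
    have hmul := hsmall.mul hlogn
    rw [zero_mul] at hmul
    apply Tendsto.congr' _ hmul
    filter_upwards [eventually_ge_atTop 2] with n hn2
    have hlogpos : 0 < Real.log n := Real.log_pos (by exact_mod_cast hn2)
    have hnpos : (0:ℝ) < n := by positivity
    have hne : Real.log n / (n:ℝ) ≠ 0 := ne_of_gt (by positivity)
    exact div_mul_cancel₀ _ hne
  -- the probability of the complement event
  set f : ℕ → ℝ := fun n => probGraph n (pCL (n1 n) (d1 n) (d2 n) (D n))
      (fun A => ¬ (n1 n < (Finset.univ.filter fun v : Fin n => n1 n ≤ v.val ∧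
        ∀ e ∈ A, ¬(e.1 = v ∧ n1 n ≤ e.2.val) ∧ ¬(e.2 = v ∧ n1 n ≤ e.1.val)).card)) with hfdef
  have hf0 : ∀ n, 0 ≤ f n := fun n =>
    probGraph_nonneg (pCL_nonneg _ _ _ _) (pCL_le_one _ _ _ _) _
  -- eventual bounds
  have E1 : ∀ᶠ n : ℕ in atTop, (n1 n : ℝ) ≤ (n:ℝ)^δ' := by
    filter_upwards [hn1, eventually_ge_atTop 1] with n h h1
    exact h.trans (Real.rpow_le_rpow_of_exponent_le (by exact_mod_cast h1) (le_max_left _ _))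
  have E2 : ∀ᶠ n : ℕ in atTop, s n ≤ ε * (Real.log n / n) := by
    filter_upwards [hsmall.eventually (eventually_le_nhds hε), eventually_ge_atTop 2]
      with n h hn2
    have hlogpos : 0 < Real.log n := Real.log_pos (by exact_mod_cast hn2)
    have hnpos : (0:ℝ) < n := by positivity
    have hln : (0:ℝ) < Real.log n / n := by positivity
    have hseq : s n = (s n / (Real.log n / n)) * (Real.log n / n) := by
      field_simp
    rw [hseq]
    exact mul_le_mul_of_nonneg_right h hln.le
  have E3 : ∀ᶠ n : ℕ in atTop, q n ≤ 1/2 := by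
    have := hs_to.eventually (eventually_le_nhds (by norm_num : (0:ℝ) < 1/2))
    filter_upwards [this] with n h
    exact (hqs n).trans h
  have E4 : ∀ᶠ n : ℕ in atTop, (n:ℝ)^δ' ≤ (n:ℝ)/2 := by
    have ht : Tendsto (fun n : ℕ => (n:ℝ)^(-(1-δ'))) atTop (nhds 0) :=
      (tendsto_rpow_neg_atTop (by linarith)).comp tendsto_natCast_atTop_atTop
    filter_upwards [ht.eventually (eventually_le_nhds (by norm_num : (0:ℝ) < 1/2)),
      eventually_ge_atTop 1] with n h h1
    have hnpos : (0:ℝ) < n := by exact_mod_cast Nat.lt_of_lt_of_le Nat.zero_lt_one h1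
    have key : ∀ (a b : ℝ), a + b = δ' → (n:ℝ)^δ' = (n:ℝ)^a * (n:ℝ)^b :=
      fun a b hab => by rw [← hab, Real.rpow_add hnpos]
    have : (n:ℝ)^δ' = (n:ℝ)^(-(1-δ')) * (n:ℝ) := by
      rw [key (-(1-δ')) 1 (by ring), Real.rpow_one]
    rw [this]
    calc (n:ℝ)^(-(1-δ')) * (n:ℝ) ≤ (1/2) * n :=
          mul_le_mul_of_nonneg_right h hnpos.le
      _ = (n:ℝ)/2 := by ring
  have E5 : ∀ᶠ n : ℕ in atTop, (n:ℝ)^δ' ≤ (n:ℝ)^θ/4 := by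
    have ht : Tendsto (fun n : ℕ => (n:ℝ)^(-(θ-δ'))) atTop (nhds 0) :=
      (tendsto_rpow_neg_atTop (by linarith)).comp tendsto_natCast_atTop_atTop
    filter_upwards [ht.eventually (eventually_le_nhds (by norm_num : (0:ℝ) < 1/4)),
      eventually_ge_atTop 1] with n h h1
    have hnpos : (0:ℝ) < n := by exact_mod_cast Nat.lt_of_lt_of_le Nat.zero_lt_one h1
    have key : ∀ (a b : ℝ), a + b = δ' → (n:ℝ)^δ' = (n:ℝ)^a * (n:ℝ)^b :=
      fun a b hab => by rw [← hab, Real.rpow_add hnpos]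
    have : (n:ℝ)^δ' = (n:ℝ)^(-(θ-δ')) * (n:ℝ)^θ := key (-(θ-δ')) θ (by ring)
    rw [this]
    have hθn : (0:ℝ) ≤ (n:ℝ)^θ := (Real.rpow_pos_of_pos hnpos θ).le
    calc (n:ℝ)^(-(θ-δ')) * (n:ℝ)^θ ≤ (1/4) * (n:ℝ)^θ :=
          mul_le_mul_of_nonneg_right h hθn
      _ = (n:ℝ)^θ/4 := by ring
  -- the main eventual bound on f
  have hfbound : ∀ᶠ n : ℕ in atTop, f n ≤ 8*(n:ℝ)^(-θ) + 8 * s n := by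
    filter_upwards [E1, E2, E3, E4, E5, eventually_ge_atTop 4] with n h1 h2 h3 h4 h5 hn4
    have hnpos : (0:ℝ) < n := by
      have : (4:ℝ) ≤ n := by exact_mod_cast hn4
      linarith
    -- n1 n is small
    have hn1half : (n1 n : ℝ) ≤ (n:ℝ)/2 := h1.trans h4
    have hn1n : 2 * n1 n ≤ n := by
      have : ((2 * n1 n : ℕ) : ℝ) ≤ (n:ℝ) := by push_cast; linarith
      exact_mod_cast this
    have hk : n - n1 n = (n - n1 n - 2) + 2 := by omega
    set k : ℕ := n - n1 n - 2 with hkdef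
    have hn1len : n1 n ≤ n := by omega
    have hcast : ((n - n1 n : ℕ) : ℝ) = (n:ℝ) - n1 n := by
      push_cast [Nat.cast_sub hn1len]; ring
    -- lower bound on μ
    set P : ℝ := (1 - q n)^(k+1) with hPdef
    have hqn0 := hq0 n
    have hexp : Real.exp (-(2*q n)) ≤ 1 - q n := exp_neg_two_le hqn0 h3
    have hP1 : Real.exp (-(2*q n))^(k+1) ≤ P := by
      rw [hPdef]
      exact pow_le_pow_left₀ (Real.exp_nonneg _) hexp (k+1)
    have hP2 : Real.exp (-(2*q n))^(k+1) = Real.exp (((k:ℝ)+1) * (-(2*q n))) := by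
      rw [← Real.exp_nat_mul]
      push_cast
      ring_nf
    have hk1n : ((k:ℝ)+1) ≤ (n:ℝ) := by
      have : k + 1 ≤ n := by omega
      exact_mod_cast this
    have hqn_log : q n * n ≤ ε * Real.log n := by
      have := (hqs n).trans h2
      have h' : q n * n ≤ (ε * (Real.log n / n)) * n := by
        exact mul_le_mul_of_nonneg_right this hnpos.le
      calc q n * n ≤ (ε * (Real.log n / n)) * n := h'
        _ = ε * Real.log n := by field_simp
    have hP3 : Real.exp (((k:ℝ)+1) * (-(2*q n))) ≥ Real.exp (-(2*(ε * Real.log n))) := by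
      apply Real.exp_le_exp.2
      have : ((k:ℝ)+1) * (2 * q n) ≤ (n:ℝ) * (2 * q n) :=
        mul_le_mul_of_nonneg_right hk1n (by linarith)
      nlinarith [hqn_log]
    have hrpow : (n:ℝ)^(-(2*ε)) = Real.exp (-(2*(ε * Real.log n))) := by
      rw [Real.rpow_def_of_pos hnpos]
      ring_nf
    have hPlow : (n:ℝ)^(-(2*ε)) ≤ P := by
      rw [hrpow]
      calc Real.exp (-(2*(ε * Real.log n))) ≤ Real.exp (((k:ℝ)+1) * (-(2*q n))) := hP3
        _ = Real.exp (-(2*q n))^(k+1) := hP2.symm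
        _ ≤ P := hP1
    set μ : ℝ := ((n - n1 n : ℕ) : ℝ) * P with hμdef
    have hPpos : 0 < P := by
      have := Real.rpow_pos_of_pos hnpos (-(2*ε))
      linarith
    have hNhalf : (n:ℝ)/2 ≤ ((n - n1 n : ℕ) : ℝ) := by rw [hcast]; linarith
    have hμlow : (n:ℝ)^θ/2 ≤ μ := by
      have key : ∀ (a b : ℝ), a + b = θ → (n:ℝ)^θ = (n:ℝ)^a * (n:ℝ)^b :=
        fun a b hab => by rw [← hab, Real.rpow_add hnpos]
      have h6 : (n:ℝ)^θ = (n:ℝ) * (n:ℝ)^(-(2*ε)) := by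
        rw [key 1 (-(2*ε)) (by rw [hθε]; ring), Real.rpow_one]
      have h7 : (n:ℝ)/2 * (n:ℝ)^(-(2*ε)) ≤ μ := by
        rw [hμdef]
        apply mul_le_mul hNhalf hPlow (Real.rpow_pos_of_pos hnpos _).le
        rw [hcast]; linarith
      rw [h6]
      calc (n:ℝ) * (n:ℝ)^(-(2*ε)) / 2 = (n:ℝ)/2 * (n:ℝ)^(-(2*ε)) := by ring
        _ ≤ μ := h7
    have hμpos : 0 < μ := lt_of_lt_of_le (by positivity) hμlow
    have hn1μ : (n1 n : ℝ) ≤ μ/2 := by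
      have : (n1 n : ℝ) ≤ (n:ℝ)^θ/4 := h1.trans h5
      linarith
    -- apply main bound
    have hmb := main_bound n (n1 n) (d1 n) (d2 n) (D n) k hk h3 (by rw [← hμdef]; exact hn1μ)
    have hfle : f n ≤ 4/μ + 8 * q n := by
      rw [hfdef]
      exact hmb
    have h4μ : 4/μ ≤ 8*(n:ℝ)^(-θ) := by
      have hnθpos : (0:ℝ) < (n:ℝ)^θ := Real.rpow_pos_of_pos hnpos θ
      have hstep : 4/μ ≤ 4/((n:ℝ)^θ/2) :=
        div_le_div_of_nonneg_left (by norm_num) (by positivity) hμlow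
      have heq : 4/((n:ℝ)^θ/2) = 8*(n:ℝ)^(-θ) := by
        rw [Real.rpow_neg hnpos.le]
        field_simp
        norm_num
      linarith [hstep, heq.le]
    have h8q : 8 * q n ≤ 8 * s n := by linarith [hqs n]
    linarith
  have hg0 : Tendsto (fun n : ℕ => 8*(n:ℝ)^(-θ) + 8 * s n) atTop (nhds 0) := by
    have h1 : Tendsto (fun n : ℕ => (n:ℝ)^(-θ)) atTop (nhds 0) :=
      (tendsto_rpow_neg_atTop hθpos).comp tendsto_natCast_atTop_atTop
    have := (h1.const_mul 8).add (hs_to.const_mul 8)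
    simpa only [mul_zero, add_zero] using this
  have hfto : Tendsto f atTop (nhds 0) :=
    squeeze_zero' (Eventually.of_forall hf0) hfbound hg0
  constructor
  · have heq : (fun n => probGraph n
        (fun e => min 1 (((bideg (n1 n) (d1 n) (d2 n) e.1 *
              bideg (n1 n) (d1 n) (d2 n) e.2 : ℕ) : ℝ) /
            ((n1 n * d1 n + n2 n * d2 n : ℕ) : ℝ)))
        (fun A => n1 n <
          (Finset.univ.filter fun v : Fin n => n1 n ≤ v.val ∧
            ∀ e ∈ A, ¬(e.1 = v ∧ n1 n ≤ e.2.val) ∧ ¬(e.2 = v ∧ n1 n ≤ e.1.val)).card))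
        = fun n => 1 - f n := by
      funext n
      exact probGraph_compl _ _
    rw [heq]
    have := (tendsto_const_nhds (x := (1:ℝ)) (f := atTop (α := ℕ))).sub hfto
    simpa only [sub_zero] using this
  · apply squeeze_zero' (Eventually.of_forall fun n =>
      probGraph_nonneg (pCL_nonneg (n1 n) (d1 n) (d2 n) (D n)) (pCL_le_one _ _ _ _) _)
      _ hfto
    apply Eventually.of_forall
    intro n
    show probGraph n (pCL (n1 n) (d1 n) (d2 n) (D n)) HasPM ≤ f n
    rw [hfdef]
    apply probGraph_mono (pCL_nonneg _ _ _ _) (pCL_le_one _ _ _ _)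
    intro A hA hPM
    rw [Finset.mem_powerset] at hA
    exact not_lt.2 (hasPM_card_le hA hPM)
end

section
/- Let d = d(n) be a sequence of bi-valued degree sequences on [n] (value d_1 with multiplicity n_1 and value d_2 with multiplicity n_2 = n − n_1, where d_1 ≥ d_2 ≥ 2) satisfying d_2² = o(n_1), d_1² = o(√(n·d_2)), and n_1 ≤ n^δ for some fixed δ < 1. Let k = k(n) = Θ(1) be a bounded sequence bounded away from 0, and let T = T(n) satisfy T = O(d_1²). Set A = ∑_{i=1}^n d_i(d_i − 1), B = A − T, A' = A/(2‖d‖_1), and B' = B/(2‖d‖_1 − k·d_2). Then Z := (A' − B')·(1 + A' + B') = o(1) as n → ∞. -/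
set_option maxHeartbeats 1000000

open Filter

private lemma key (C CT N m1 m2 D1 D2 kk t ε : ℝ)
    (hC : 0 ≤ C) (hCT : 0 ≤ CT)
    (hD2 : 2 ≤ D2) (hD12 : D2 ≤ D1)
    (hm1 : 0 ≤ m1) (hsum : m1 + m2 = N) (hm1N : m1 ≤ N / 2)
    (hε0 : 0 ≤ ε) (hε1 : ε ≤ 1)
    (hD1 : D1 ^ 2 ≤ ε * Real.sqrt (N * D2))
    (hk1 : 0 ≤ kk) (hk2 : kk ≤ C)
    (hNC : 2 * C ≤ N) (hN1 : 1 ≤ N)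
    (ht : |t| ≤ CT * D1 ^ 2) :
    |((m1 * (D1 * (D1 - 1)) + m2 * (D2 * (D2 - 1))) / (2 * (m1 * D1 + m2 * D2)) -
        (m1 * (D1 * (D1 - 1)) + m2 * (D2 * (D2 - 1)) - t) /
          (2 * (m1 * D1 + m2 * D2) - kk * D2)) *
      (1 + (m1 * (D1 * (D1 - 1)) + m2 * (D2 * (D2 - 1))) / (2 * (m1 * D1 + m2 * D2)) +
        (m1 * (D1 * (D1 - 1)) + m2 * (D2 * (D2 - 1)) - t) /
          (2 * (m1 * D1 + m2 * D2) - kk * D2))| ≤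
      (10 * CT + 4 * CT ^ 2 + 5 * C + 2 * C * CT) * ε := by
  have hD2pos : (0:ℝ) < D2 := by linarith
  have hD1pos : (0:ℝ) < D1 := by linarith
  have hND2 : (0:ℝ) ≤ N * D2 := by nlinarith only [hN1, hD2]
  set S : ℝ := Real.sqrt (N * D2) with hSdef
  have hS2 : S ^ 2 = N * D2 := Real.sq_sqrt hND2
  have hSnn : 0 ≤ S := Real.sqrt_nonneg _
  clear_value S
  clear hSdef
  set A : ℝ := m1 * (D1 * (D1 - 1)) + m2 * (D2 * (D2 - 1)) with hAdef
  set nd : ℝ := m1 * D1 + m2 * D2 with hnddef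
  set dd : ℝ := 2 * nd - kk * D2 with hdddef
  clear_value A nd dd
  have hS1 : 1 ≤ S := by nlinarith only [hS2, hSnn, hN1, hD2]
  have hS0 : 0 < S := by linarith
  have hm2 : 0 ≤ m2 := by linarith [hm1N, hsum, hN1]
  have hm2half : N / 2 ≤ m2 := by linarith [hm1N, hsum]
  have hD14 : D1 ^ 4 ≤ ε ^ 2 * (N * D2) := by
    nlinarith only [hD1, hS2, sq_nonneg D1, mul_nonneg hε0 hSnn]
  have hD24 : D2 ^ 4 ≤ ε ^ 2 * (N * D2) :=
    le_trans (pow_le_pow_left₀ hD2pos.le hD12 4) hD14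
  have hD23 : D2 ^ 3 ≤ ε ^ 2 * N := by nlinarith only [hD24, hD2pos]
  have he2 : ε ^ 2 ≤ 1 := by nlinarith only [hε0, hε1]
  have hD2sq : 2 * D2 ≤ D2 ^ 2 := by nlinarith only [hD2]
  have hD2cube : 4 * D2 ≤ D2 ^ 3 := by
    nlinarith only [mul_le_mul_of_nonneg_right hD2sq hD2pos.le, hD2sq]
  have hD2N : D2 ≤ N := by nlinarith only [hD2cube, hD23, he2, hN1, hD2]
  have hD2S : D2 ≤ S := by nlinarith only [hS2, hSnn, hD2N, hD2pos, sq_nonneg (S - D2)]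
  have hSN : S ≤ N := by nlinarith only [hS2, hSnn, hD2N, hN1, sq_nonneg (N - S)]
  have hndl : N * D2 / 2 ≤ nd := by
    rw [hnddef]; nlinarith only [mul_nonneg hm1 hD1pos.le, hm2half, hD2pos, hm2]
  have hnd0 : (0:ℝ) < nd := by nlinarith only [hndl, hN1, hD2]
  have hdd : nd ≤ dd := by
    rw [hdddef]
    nlinarith only [hndl, hk2, hNC, hD2pos, hk1, hC]
  have hdd0 : (0:ℝ) < dd := by linarith
  have hA0 : 0 ≤ A := by
    rw [hAdef]
    have h1 : 0 ≤ m1 * (D1 * (D1 - 1)) := mul_nonneg hm1 (by nlinarith only [hD12, hD2])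
    have h2 : 0 ≤ m2 * (D2 * (D2 - 1)) := mul_nonneg hm2 (by nlinarith only [hD2])
    linarith
  set G : ℝ := ε * S / D2 with hGdef
  have hG0 : 0 ≤ G := by positivity
  have hGD2 : G * D2 = ε * S := by rw [hGdef]; field_simp
  clear_value G
  clear hGdef
  set u : ℝ := D2 + G with hudef
  have hu0 : 0 ≤ u := by rw [hudef]; linarith
  clear_value u
  have hm1D1 : m1 * D1 ^ 2 * D2 ≤ nd * (ε * S) := by
    have h1 : m1 * D1 ^ 2 * D2 ≤ m1 * D1 ^ 2 * D1 := by
      nlinarith only [mul_nonneg hm1 (sq_nonneg D1), hD12]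
    have h2 : m1 * D1 ^ 2 * D1 ≤ (m1 * D1) * (ε * S) := by
      have h := mul_le_mul_of_nonneg_left hD1 (mul_nonneg hm1 hD1pos.le)
      nlinarith only [h]
    have h3 : (m1 * D1) * (ε * S) ≤ nd * (ε * S) := by
      have hle : m1 * D1 ≤ nd := by
        rw [hnddef]; nlinarith only [mul_nonneg hm2 hD2pos.le]
      exact mul_le_mul_of_nonneg_right hle (mul_nonneg hε0 hSnn)
    linarith
  have hAu : A ≤ nd * u := by
    have h1 : m1 * D1 ^ 2 ≤ nd * G := by
      refine le_of_mul_le_mul_right ?_ hD2pos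
      have e : nd * G * D2 = nd * (ε * S) := by rw [mul_assoc, hGD2]
      linarith only [hm1D1, e.ge, e.le]
    have h2 : m2 * (D2 * (D2 - 1)) ≤ m2 * D2 * D2 := by
      nlinarith only [mul_nonneg hm2 hD2pos.le]
    have h3 : m1 * (D1 * (D1 - 1)) ≤ m1 * D1 ^ 2 := by
      nlinarith only [mul_nonneg hm1 hD1pos.le]
    have h4 : m2 * D2 * D2 ≤ nd * D2 := by
      rw [hnddef]; nlinarith only [mul_nonneg hm1 hD1pos.le, hD2pos]
    rw [hudef, hAdef, mul_add]
    linarith only [h1, h2, h3, h4]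
  have hGS : G ≤ S := by nlinarith only [hGD2, hε1, hSnn, hD2, hG0]
  have huS : u ≤ 2 * S := by rw [hudef]; linarith only [hD2S, hGS]
  have hD2e : 4 * D2 ≤ ε ^ 2 * N := by linarith only [hD2cube, hD23]
  have hGe : 2 * G ≤ ε * N := by
    nlinarith only [mul_le_mul_of_nonneg_left hSN hε0, hGD2, hD2, hG0]
  have huN : u ≤ ε * N := by
    rw [hudef]
    nlinarith only [hD2e, hGe, hN1,
      mul_nonneg (mul_nonneg hε0 (sub_nonneg.2 hε1)) (by linarith : (0:ℝ) ≤ N)]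
  have hG2D2 : G ^ 2 * D2 = ε ^ 2 * N := by
    have h : (G ^ 2 * D2) * D2 = (ε ^ 2 * N) * D2 := by
      linear_combination (G * D2 + ε * S) * hGD2 + ε ^ 2 * hS2
    exact mul_right_cancel₀ (ne_of_gt hD2pos) h
  have hu2 : u ^ 2 ≤ 2 * ε ^ 2 * N := by
    have hd2sq : D2 ^ 2 ≤ ε ^ 2 * N / 2 := by nlinarith only [hD23, hD2]
    have hg2 : G ^ 2 ≤ ε ^ 2 * N / 2 := by nlinarith only [hG2D2, hD2, sq_nonneg G]
    rw [hudef]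
    nlinarith only [hd2sq, hg2, sq_nonneg (D2 - G)]
  -- ## Main fraction bounds
  have hndne : nd ≠ 0 := ne_of_gt hnd0
  have hddne : dd ≠ 0 := ne_of_gt hdd0
  have hN0 : (0:ℝ) < N := by linarith
  have hP1 : CT * D1 ^ 2 / nd ≤ 2 * CT * ε / S := by
    rw [div_le_div_iff₀ hnd0 hS0]
    calc CT * D1 ^ 2 * S ≤ CT * (ε * S * S) := by
          nlinarith only [mul_le_mul_of_nonneg_left
            (mul_le_mul_of_nonneg_right hD1 hSnn) hCT]
      _ = CT * ε * (N * D2) := by linear_combination CT * ε * hS2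
      _ ≤ 2 * CT * ε * nd := by
          nlinarith only [mul_le_mul_of_nonneg_left hndl (mul_nonneg hCT hε0)]
  have habs1 : |t| / dd ≤ 2 * CT * ε / S := by
    have h1 : |t| / dd ≤ CT * D1 ^ 2 / nd := div_le_div₀ (by positivity) ht hnd0 hdd
    linarith only [h1, hP1]
  have habs2 : A * kk * D2 / (2 * nd * dd) ≤ C * u / N := by
    have hnum : A * kk * D2 ≤ nd * u * C * D2 :=
      mul_le_mul_of_nonneg_right
        (mul_le_mul hAu hk2 hk1 (mul_nonneg hnd0.le hu0)) hD2pos.le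
    have hden : 2 * nd * nd ≤ 2 * nd * dd := by nlinarith only [hdd, hnd0]
    have step1 : A * kk * D2 / (2 * nd * dd) ≤ nd * u * C * D2 / (2 * nd * nd) :=
      div_le_div₀ (by positivity) hnum (by positivity) hden
    have step2 : nd * u * C * D2 / (2 * nd * nd) = u * C * D2 / (2 * nd) := by
      rw [div_eq_div_iff (by positivity) (by positivity)]; ring
    have step3 : u * C * D2 / (2 * nd) ≤ C * u / N := by
      rw [div_le_div_iff₀ (by positivity) hN0]
      nlinarith only [mul_nonneg (mul_nonneg hC hu0) (sub_nonneg.2 hndl)]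
    calc A * kk * D2 / (2 * nd * dd) ≤ nd * u * C * D2 / (2 * nd * nd) := step1
      _ = u * C * D2 / (2 * nd) := step2
      _ ≤ C * u / N := step3
  have h2ndne : (2 * nd - kk * D2) ≠ 0 := by rw [← hdddef]; exact hddne
  have heq : A / (2 * nd) - (A - t) / dd = t / dd - A * kk * D2 / (2 * nd * dd) := by
    rw [hdddef]
    field_simp
    ring
  have hdiff : |A / (2 * nd) - (A - t) / dd| ≤ 2 * CT * ε / S + C * u / N := by
    rw [heq]
    calc |t / dd - A * kk * D2 / (2 * nd * dd)|
        ≤ |t / dd| + |A * kk * D2 / (2 * nd * dd)| := abs_sub _ _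
      _ = |t| / dd + A * kk * D2 / (2 * nd * dd) := by
          rw [abs_div, abs_of_pos hdd0,
            abs_of_nonneg (by positivity : (0:ℝ) ≤ A * kk * D2 / (2 * nd * dd))]
      _ ≤ 2 * CT * ε / S + C * u / N := add_le_add habs1 habs2
  have hq : |1 + A / (2 * nd) + (A - t) / dd| ≤ 1 + 2 * u + 2 * CT * ε / S := by
    have hA' : A / (2 * nd) ≤ u / 2 := by
      rw [div_le_div_iff₀ (by positivity) (by norm_num : (0:ℝ) < 2)]
      nlinarith only [hAu]
    have hB' : |(A - t) / dd| ≤ u + 2 * CT * ε / S := by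
      rw [abs_div, abs_of_pos hdd0]
      have h1 : |A - t| ≤ A + CT * D1 ^ 2 := by
        calc |A - t| ≤ |A| + |t| := abs_sub _ _
          _ ≤ A + CT * D1 ^ 2 := by rw [abs_of_nonneg hA0]; linarith only [ht]
      have h2 : |A - t| / dd ≤ (A + CT * D1 ^ 2) / nd :=
        div_le_div₀ (by positivity) h1 hnd0 hdd
      have h3 : (A + CT * D1 ^ 2) / nd = A / nd + CT * D1 ^ 2 / nd := add_div _ _ _
      have h4 : A / nd ≤ u := by
        rw [div_le_iff₀ hnd0]
        nlinarith only [hAu]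
      linarith only [h2, h3.le, h3.ge, h4, hP1]
    calc |1 + A / (2 * nd) + (A - t) / dd|
        ≤ |1 + A / (2 * nd)| + |(A - t) / dd| := abs_add_le _ _
      _ = 1 + A / (2 * nd) + |(A - t) / dd| := by
          rw [abs_of_nonneg (by positivity : (0:ℝ) ≤ 1 + A / (2 * nd))]
      _ ≤ 1 + u / 2 + (u + 2 * CT * ε / S) := by
          refine add_le_add (add_le_add le_rfl hA') hB'
      _ ≤ 1 + 2 * u + 2 * CT * ε / S := by linarith only [hu0]
  have hfinal : (2 * CT * ε / S + C * u / N) * (1 + 2 * u + 2 * CT * ε / S) ≤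
      (10 * CT + 4 * CT ^ 2 + 5 * C + 2 * C * CT) * ε := by
    have hSne : S ≠ 0 := ne_of_gt hS0
    have hNne : N ≠ 0 := ne_of_gt hN0
    have e : (2 * CT * ε / S + C * u / N) * (1 + 2 * u + 2 * CT * ε / S)
        = 2 * CT * ε / S + 4 * CT * ε * u / S + 4 * CT ^ 2 * ε ^ 2 / S ^ 2
          + C * u / N + 2 * C * u ^ 2 / N + 2 * C * CT * ε * u / (N * S) := by
      field_simp
      ring
    rw [e]
    have t1 : 2 * CT * ε / S ≤ 2 * CT * ε := by
      rw [div_le_iff₀ hS0]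
      nlinarith only [mul_nonneg (mul_nonneg hCT hε0) (sub_nonneg.2 hS1)]
    have t2 : 4 * CT * ε * u / S ≤ 8 * CT * ε := by
      rw [div_le_iff₀ hS0]
      nlinarith only [mul_nonneg (mul_nonneg hCT hε0) (sub_nonneg.2 huS)]
    have t3 : 4 * CT ^ 2 * ε ^ 2 / S ^ 2 ≤ 4 * CT ^ 2 * ε := by
      rw [div_le_iff₀ (by positivity : (0:ℝ) < S ^ 2)]
      nlinarith only [mul_nonneg (mul_nonneg (sq_nonneg CT) hε0)
        (show (0:ℝ) ≤ S ^ 2 - ε by nlinarith only [hS1, hε1, hSnn])]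
    have t4 : C * u / N ≤ C * ε := by
      rw [div_le_iff₀ hN0]
      nlinarith only [mul_nonneg hC (sub_nonneg.2 huN)]
    have t5 : 2 * C * u ^ 2 / N ≤ 4 * C * ε := by
      rw [div_le_iff₀ hN0]
      nlinarith only [mul_nonneg hC (sub_nonneg.2 hu2),
        mul_nonneg (mul_nonneg (mul_nonneg hC hε0) (sub_nonneg.2 hε1)) hN0.le]
    have t6 : 2 * C * CT * ε * u / (N * S) ≤ 2 * C * CT * ε := by
      rw [div_le_iff₀ (by positivity : (0:ℝ) < N * S)]
      have hNS : u ≤ N * S := by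
        nlinarith only [huN, hε1, hN0, hS1,
          mul_nonneg hN0.le (sub_nonneg.2 hS1),
          mul_nonneg (sub_nonneg.2 hε1) hN0.le]
      nlinarith only [mul_nonneg (mul_nonneg (mul_nonneg hC hCT) hε0) (sub_nonneg.2 hNS)]
    linarith only [t1, t2, t3, t4, t5, t6]
  rw [abs_mul]
  calc |A / (2 * nd) - (A - t) / dd| * |1 + A / (2 * nd) + (A - t) / dd|
      ≤ (2 * CT * ε / S + C * u / N) * (1 + 2 * u + 2 * CT * ε / S) :=
        mul_le_mul hdiff hq (abs_nonneg _) (by positivity)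
    _ ≤ (10 * CT + 4 * CT ^ 2 + 5 * C + 2 * C * CT) * ε := hfinal

/-- The intermediate asymptotic lemma (Lemma "G(n,d) 0-statement Intermediate Lemma").
For bi-valued degree sequences (`d1 ≥ d2 ≥ 2`, multiplicities `n1`, `n2 = n - n1`)
with `d2² = o(n1)`, `d1² = o(√(n·d2))`, `n1 ≤ n^δ` for a fixed `δ < 1`, and with
`k = Θ(1)` and `T = O(d1²)`, letting `A = ∑ d_i(d_i-1)`, `B = A - T`,
`A' = A/(2‖d‖₁)` and `B' = B/(2‖d‖₁ - k·d2)`, one has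
`Z = (A' - B')·(1 + A' + B') = o(1)`. -/
theorem stmt17 (n1 n2 d1 d2 : ℕ → ℕ)
    (hn : ∀ n, n1 n + n2 n = n)
    (hd2 : ∀ n, 2 ≤ d2 n) (hd12 : ∀ n, d2 n ≤ d1 n)
    (hA1 : Tendsto (fun n => ((d2 n : ℝ)) ^ 2 / (n1 n : ℝ)) atTop (nhds 0))
    (hA2 : Tendsto (fun n => ((d1 n : ℝ)) ^ 2 /
        Real.sqrt ((n : ℝ) * (d2 n : ℝ))) atTop (nhds 0))
    (δ : ℝ) (hδ : δ < 1)
    (hA5 : ∀ᶠ n : ℕ in atTop, (n1 n : ℝ) ≤ ((n : ℝ)) ^ δ)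
    (k : ℕ → ℝ) (c C : ℝ) (hc : 0 < c) (hk : ∀ n, c ≤ k n ∧ k n ≤ C)
    (T : ℕ → ℝ) (CT : ℝ) (hT : ∀ n, |T n| ≤ CT * ((d1 n : ℝ)) ^ 2) :
    Tendsto (fun n =>
        let A : ℝ := (n1 n : ℝ) * ((d1 n : ℝ) * ((d1 n : ℝ) - 1)) +
          (n2 n : ℝ) * ((d2 n : ℝ) * ((d2 n : ℝ) - 1));
        let nd : ℝ := (n1 n : ℝ) * (d1 n : ℝ) + (n2 n : ℝ) * (d2 n : ℝ);
        let B : ℝ := A - T n;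
        let A' : ℝ := A / (2 * nd);
        let B' : ℝ := B / (2 * nd - k n * (d2 n : ℝ));
        (A' - B') * (1 + A' + B'))
      atTop (nhds 0) := by
  have hC0 : 0 ≤ C := le_trans hc.le (le_trans (hk 0).1 (hk 0).2)
  have hCT0 : 0 ≤ CT := by
    have h := hT 0
    have hd : (2:ℝ) ≤ (d1 0 : ℝ) := by
      exact_mod_cast le_trans (hd2 0) (hd12 0)
    have h0 : (0:ℝ) ≤ CT * (d1 0 : ℝ) ^ 2 := le_trans (abs_nonneg _) h
    have h4 : (4:ℝ) ≤ (d1 0 : ℝ) ^ 2 := by nlinarith [hd]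
    nlinarith [h0, h4]
  set K : ℝ := 10 * CT + 4 * CT ^ 2 + 5 * C + 2 * C * CT with hK
  have hKtend : Tendsto (fun n => K * ((d1 n : ℝ) ^ 2 /
      Real.sqrt ((n : ℝ) * (d2 n : ℝ)))) atTop (nhds 0) := by
    simpa using hA2.const_mul K
  -- eventual facts
  have E1 : ∀ᶠ n : ℕ in atTop, (d1 n : ℝ) ^ 2 / Real.sqrt ((n : ℝ) * (d2 n : ℝ)) ≤ 1 :=
    (hA2.eventually_lt_const (by norm_num : (0:ℝ) < 1)).mono fun n h => h.le
  have hpow : Tendsto (fun n : ℕ => (n : ℝ) ^ (δ - 1)) atTop (nhds 0) := by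
    have h := (tendsto_rpow_neg_atTop (show 0 < 1 - δ by linarith)).comp
      (tendsto_natCast_atTop_atTop (R := ℝ))
    simpa [Function.comp_def, neg_sub] using h
  have E3 : ∀ᶠ n : ℕ in atTop, (n1 n : ℝ) ≤ (n : ℝ) / 2 := by
    filter_upwards [hA5, hpow.eventually_lt_const (by norm_num : (0:ℝ) < 1/2),
      eventually_ge_atTop 1] with n h5 hhalf hn1
    have hn1R : (1:ℝ) ≤ (n : ℝ) := by exact_mod_cast hn1
    have hnpos : (0:ℝ) < (n : ℝ) := by linarith
    have hpowsplit : (n : ℝ) ^ δ = (n : ℝ) ^ (δ - 1) * (n : ℝ) := by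
      rw [show δ = (δ - 1) + 1 by ring, Real.rpow_add hnpos, Real.rpow_one]
      ring_nf
    have := mul_le_mul_of_nonneg_right hhalf.le (by linarith : (0:ℝ) ≤ (n : ℝ))
    calc (n1 n : ℝ) ≤ (n : ℝ) ^ δ := h5
      _ = (n : ℝ) ^ (δ - 1) * (n : ℝ) := hpowsplit
      _ ≤ 1 / 2 * (n : ℝ) := this
      _ = (n : ℝ) / 2 := by ring
  have E4 : ∀ᶠ n : ℕ in atTop, 2 * C ≤ (n : ℝ) ∧ 1 ≤ (n : ℝ) := by
    have ht' := tendsto_natCast_atTop_atTop (R := ℝ)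
    filter_upwards [ht'.eventually_ge_atTop (2 * C), ht'.eventually_ge_atTop 1] with n h1 h2
    exact ⟨h1, h2⟩
  apply squeeze_zero_norm' _ hKtend
  filter_upwards [E1, E3, E4] with n h1 h3 h4
  set ε : ℝ := (d1 n : ℝ) ^ 2 / Real.sqrt ((n : ℝ) * (d2 n : ℝ)) with hε
  have hD2 : (2:ℝ) ≤ (d2 n : ℝ) := by exact_mod_cast hd2 n
  have hD12 : (d2 n : ℝ) ≤ (d1 n : ℝ) := by exact_mod_cast hd12 n
  have hsum : (n1 n : ℝ) + (n2 n : ℝ) = (n : ℝ) := by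
    have := hn n
    exact_mod_cast congrArg (Nat.cast : ℕ → ℝ) this
  have hSpos : 0 < Real.sqrt ((n : ℝ) * (d2 n : ℝ)) := by
    apply Real.sqrt_pos.2
    nlinarith [h4.2]
  have hεS : (d1 n : ℝ) ^ 2 ≤ ε * Real.sqrt ((n : ℝ) * (d2 n : ℝ)) := by
    rw [hε, div_mul_cancel₀ _ (ne_of_gt hSpos)]
  have hkey := key C CT (n : ℝ) (n1 n : ℝ) (n2 n : ℝ) (d1 n : ℝ) (d2 n : ℝ)
    (k n) (T n) ε hC0 hCT0 hD2 hD12 (Nat.cast_nonneg _) hsum h3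
    (by positivity) h1 hεS (le_trans hc.le (hk n).1) (hk n).2 h4.1 h4.2 (hT n)
  rw [Real.norm_eq_abs]
  exact hkey
end
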